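/- arXiv:2310.15803 — 14 statements merged into one kernel-verified Lean document; each statement's English description precedes it below -/
import Mathlib

section
/- The pair k1 = (βs/βb)·(−δ2)/(1 − δ2) and C2 = (βs/(1 − δ2))^{1−δ2} · (βb/(−δ2))^{δ2} satisfies the smooth-fit conditions βs − βb·k1 = C2·k1^{δ2} and −βb = C2·δ2·k1^{δ2−1}. -/
/-- k1 = (βs/βb)·(−δ2)/(1−δ2) and C2 = (βs/(1−δ2))^{1−δ2}·(βb/(−δ2))^{δ2}
satisfy the smooth-fit conditions βs − βb·k1 = C2·k1^{δ2} and −βb = C2·δ2·k1^{δ2−1}. -/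
theorem stmt_2 (lam ρ μ1 μ2 δ1 δ2 βs βb : ℝ)
    (hlam : 0 < lam) (hμ1 : μ1 < ρ) (hμ2 : μ2 < ρ)
    (hβs : 0 < βs) (hβ : βs < βb)
    (hδ1 : δ1 = (1 + (μ1 - μ2) / lam
      + Real.sqrt ((1 + (μ1 - μ2) / lam) ^ 2 + 4 * (ρ - μ1) / lam)) / 2)
    (hδ2 : δ2 = (1 + (μ1 - μ2) / lam
      - Real.sqrt ((1 + (μ1 - μ2) / lam) ^ 2 + 4 * (ρ - μ1) / lam)) / 2) :
    βs - βb * ((βs / βb) * (-δ2) / (1 - δ2))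
      = (βs / (1 - δ2)) ^ (1 - δ2) * (βb / (-δ2)) ^ δ2
        * ((βs / βb) * (-δ2) / (1 - δ2)) ^ δ2 ∧
    -βb = (βs / (1 - δ2)) ^ (1 - δ2) * (βb / (-δ2)) ^ δ2 * δ2
        * ((βs / βb) * (-δ2) / (1 - δ2)) ^ (δ2 - 1) := by
  have hβb : 0 < βb := hβs.trans hβ
  set t : ℝ := 1 + (μ1 - μ2) / lam with ht
  have hpos : 0 < 4 * (ρ - μ1) / lam := div_pos (by linarith) hlam
  have hts : t < Real.sqrt (t ^ 2 + 4 * (ρ - μ1) / lam) := by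
    rcases le_or_gt 0 t with h | h
    · exact (Real.lt_sqrt h).mpr (by linarith)
    · exact h.trans_le (Real.sqrt_nonneg _)
  have hδ2neg : δ2 < 0 := by rw [hδ2]; linarith
  have h1 : (0:ℝ) < 1 - δ2 := by linarith
  have ha : 0 < βs / (1 - δ2) := div_pos hβs h1
  have hb : 0 < βb / (-δ2) := div_pos hβb (by linarith)
  have hδ2ne : δ2 ≠ 0 := ne_of_lt hδ2neg
  have h1ne : (1 - δ2) ≠ 0 := h1.ne'
  have hβbne : βb ≠ 0 := hβb.ne'
  have hk : (βs / βb) * (-δ2) / (1 - δ2) = (βs / (1 - δ2)) / (βb / (-δ2)) := by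
    rw [div_div_div_comm]
    field_simp
  rw [hk]
  have hdiv : ∀ z : ℝ, ((βs / (1 - δ2)) / (βb / (-δ2))) ^ z
      = (βs / (1 - δ2)) ^ z / (βb / (-δ2)) ^ z := fun z =>
    Real.div_rpow ha.le hb.le z
  have hbne : ∀ z : ℝ, (βb / (-δ2)) ^ z ≠ 0 := fun z =>
    (Real.rpow_pos_of_pos hb z).ne'
  have hane : ∀ z : ℝ, (βs / (1 - δ2)) ^ z ≠ 0 := fun z =>
    (Real.rpow_pos_of_pos ha z).ne'
  constructor
  · rw [hdiv]
    have : (βs / (1 - δ2)) ^ (1 - δ2) * (βb / (-δ2)) ^ δ2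
        * ((βs / (1 - δ2)) ^ δ2 / (βb / (-δ2)) ^ δ2)
        = (βs / (1 - δ2)) ^ (1 - δ2) * (βs / (1 - δ2)) ^ δ2 := by
      rw [mul_assoc, mul_div_assoc', mul_comm ((βb / (-δ2)) ^ δ2), mul_div_assoc,
        div_self (hbne δ2), mul_one]
    rw [this, ← Real.rpow_add ha,
      show (1 - δ2 + δ2) = (1:ℝ) by ring, Real.rpow_one]
    field_simp
    ring
  · rw [hdiv]
    have : (βs / (1 - δ2)) ^ (1 - δ2) * (βb / (-δ2)) ^ δ2 * δ2
        * ((βs / (1 - δ2)) ^ (δ2 - 1) / (βb / (-δ2)) ^ (δ2 - 1))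
        = δ2 * ((βs / (1 - δ2)) ^ (1 - δ2) * (βs / (1 - δ2)) ^ (δ2 - 1))
          * ((βb / (-δ2)) ^ δ2 / (βb / (-δ2)) ^ (δ2 - 1)) := by
      ring
    rw [this, ← Real.rpow_add ha, ← Real.rpow_sub hb,
      show (1 - δ2 + (δ2 - 1)) = (0:ℝ) by ring,
      show (δ2 - (δ2 - 1)) = (1:ℝ) by ring, Real.rpow_zero, Real.rpow_one]
    rw [eq_comm, mul_one, mul_comm, div_neg, neg_mul, div_mul_eq_mul_div,
      mul_div_assoc, div_self hδ2ne, mul_one]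
end

section
/- Define f(y) = C2·(δ1 − δ2)·y^{δ2} + βs·(δ1 − 1)·y − βb·δ1 for y > 0 and let y_c = [βs·(δ1 − 1)/(C2·(−δ2)·(δ1 − δ2))]^{1/(δ2 − 1)}. Then f(y_c) = βb·δ1·[β^{−1−r/(1+r)}·(1 + r/δ1)^{1/(1+r)}·(1 − 1/δ1)^{r/(1+r)} − 1], where r = −δ2 and β = βb/βs, and f(y_c) < 0. -/
set_option maxHeartbeats 1000000

/-- value of f at the minimizer y_c:
f(y_c) = βb·δ1·[β^{−1−r/(1+r)}·(1 + r/δ1)^{1/(1+r)}·(1 − 1/δ1)^{r/(1+r)} − 1]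
with r = −δ2 and β = βb/βs, and f(y_c) < 0. -/
theorem stmt_5 (lam ρ μ1 μ2 δ1 δ2 βs βb C2 yc : ℝ)
    (hlam : 0 < lam) (hμ1 : μ1 < ρ) (hμ2 : μ2 < ρ)
    (hβs : 0 < βs) (hβ : βs < βb)
    (hδ1 : δ1 = (1 + (μ1 - μ2) / lam
      + Real.sqrt ((1 + (μ1 - μ2) / lam) ^ 2 + 4 * (ρ - μ1) / lam)) / 2)
    (hδ2 : δ2 = (1 + (μ1 - μ2) / lam
      - Real.sqrt ((1 + (μ1 - μ2) / lam) ^ 2 + 4 * (ρ - μ1) / lam)) / 2)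
    (hC2 : C2 = (βs / (1 - δ2)) ^ (1 - δ2) * (βb / (-δ2)) ^ δ2)
    (hyc : yc = (βs * (δ1 - 1) / (C2 * (-δ2) * (δ1 - δ2))) ^ (1 / (δ2 - 1)))
    (f : ℝ → ℝ)
    (hf : f = fun y : ℝ => C2 * (δ1 - δ2) * y ^ δ2 + βs * (δ1 - 1) * y - βb * δ1) :
    f yc = βb * δ1 *
      ((βb / βs) ^ (-1 - (-δ2) / (1 + (-δ2)))
        * (1 + (-δ2) / δ1) ^ (1 / (1 + (-δ2)))
        * (1 - 1 / δ1) ^ ((-δ2) / (1 + (-δ2))) - 1) ∧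
    f yc < 0 := by
  have hβb : 0 < βb := hβs.trans hβ
  -- basic facts about δ1 and δ2
  set a : ℝ := 1 + (μ1 - μ2) / lam with ha
  have hb : 0 < 4 * (ρ - μ1) / lam := div_pos (by linarith) hlam
  have harg : 0 ≤ a ^ 2 + 4 * (ρ - μ1) / lam := by nlinarith [sq_nonneg a]
  set s : ℝ := Real.sqrt (a ^ 2 + 4 * (ρ - μ1) / lam) with hs
  have hs2 : s ^ 2 = a ^ 2 + 4 * (ρ - μ1) / lam := Real.sq_sqrt harg
  have hs0 : 0 ≤ s := Real.sqrt_nonneg _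
  have hab : 4 < 4 * a + 4 * (ρ - μ1) / lam := by
    have h2 : 0 < 4 * (ρ - μ2) / lam := div_pos (by linarith) hlam
    have h3 : 4 * (ρ - μ2) / lam = 4 * (ρ - μ1) / lam + 4 * (μ1 - μ2) / lam := by ring
    have h4 : 4 * a = 4 + 4 * (μ1 - μ2) / lam := by rw [ha]; ring
    linarith
  have hδ1gt : 1 < δ1 := by
    rw [hδ1]; nlinarith [hs2, hs0, hab]
  have hδ2neg : δ2 < 0 := by
    rw [hδ2]; nlinarith [hs2, hs0, hb]
  clear hδ1 hδ2 hs2 hs0 harg hab hb ha hs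
  obtain ⟨r, hr, rfl⟩ : ∃ r : ℝ, 0 < r ∧ δ2 = -r := ⟨-δ2, by linarith, by ring⟩
  simp only [neg_neg, sub_neg_eq_add] at hC2 hyc hf ⊢
  have h1r : (0:ℝ) < 1 + r := by linarith
  have hδ10 : (0:ℝ) < δ1 := by linarith
  have hδ11 : (0:ℝ) < δ1 - 1 := by linarith
  have hδ1r : (0:ℝ) < δ1 + r := by linarith
  have hC2pos : 0 < C2 := by
    rw [hC2]
    have h1 : (0:ℝ) < βs / (1 + r) := by positivity
    have h2 : (0:ℝ) < βb / r := by positivity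
    positivity
  obtain ⟨A, hA⟩ : ∃ A : ℝ, A = βs * (δ1 - 1) / (C2 * r * (δ1 + r)) := ⟨_, rfl⟩
  rw [← hA] at hyc
  have hApos : 0 < A := by rw [hA]; positivity
  have e1 : 1 / (-r - 1) = -(1 / (1 + r)) := by
    rw [show -r - 1 = -(1 + r) by ring, one_div_neg_eq_neg_one_div]
  have hyc' : yc = A ^ (-(1 / (1 + r))) := by rw [hyc, e1]
  have hycpos : 0 < yc := by rw [hyc']; exact Real.rpow_pos_of_pos hApos _
  have hyc_r : yc ^ (-r) = A ^ (r / (1 + r)) := by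
    rw [hyc', ← Real.rpow_mul hApos.le]
    congr 1
    field_simp
  have hkey : βs * (δ1 - 1) = A * (C2 * r * (δ1 + r)) := by
    rw [hA, div_mul_cancel₀ _ (by positivity : C2 * r * (δ1 + r) ≠ 0)]
  have hAA : A * A ^ (-(1 / (1 + r))) = A ^ (r / (1 + r)) := by
    nth_rewrite 1 [← Real.rpow_one A]
    rw [← Real.rpow_add hApos]
    congr 1
    field_simp
    ring
  have hterm2 : βs * (δ1 - 1) * yc = C2 * r * (δ1 + r) * A ^ (r / (1 + r)) := by
    rw [hkey, hyc', show A * (C2 * r * (δ1 + r)) * A ^ (-(1 / (1 + r)))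
      = C2 * r * (δ1 + r) * (A * A ^ (-(1 / (1 + r)))) from by ring, hAA]
  have hfyc : f yc = C2 * (δ1 + r) * (1 + r) * A ^ (r / (1 + r)) - βb * δ1 := by
    rw [hf]
    simp only []
    rw [hyc_r, hterm2]
    ring
  -- the main rpow identity, via logarithms
  have hβdiv : (0:ℝ) < βb / βs := by positivity
  have hp1 : (0:ℝ) < 1 + r / δ1 := by positivity
  have hp2 : (0:ℝ) < 1 - 1 / δ1 := by
    rw [sub_pos, div_lt_one hδ10]; exact hδ1gt
  have hmain : C2 * (δ1 + r) * (1 + r) * A ^ (r / (1 + r))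
      = βb * δ1 * ((βb / βs) ^ (-1 - r / (1 + r))
        * (1 + r / δ1) ^ (1 / (1 + r)) * (1 - 1 / δ1) ^ (r / (1 + r))) := by
    have hLpos : 0 < C2 * (δ1 + r) * (1 + r) * A ^ (r / (1 + r)) := by positivity
    have hRpos : 0 < βb * δ1 * ((βb / βs) ^ (-1 - r / (1 + r))
        * (1 + r / δ1) ^ (1 / (1 + r)) * (1 - 1 / δ1) ^ (r / (1 + r))) := by positivity
    rw [← Real.exp_log hLpos, ← Real.exp_log hRpos]
    congr 1
    have hlogC2 : Real.log C2
        = (1 + r) * (Real.log βs - Real.log (1 + r)) + (-r) * (Real.log βb - Real.log r) := by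
      rw [hC2, Real.log_mul (by positivity) (by positivity),
        Real.log_rpow (by positivity), Real.log_rpow (by positivity),
        Real.log_div (by positivity) (by positivity),
        Real.log_div (by positivity) (by positivity)]
    have hlogA : Real.log A
        = Real.log βs + Real.log (δ1 - 1)
          - (Real.log C2 + Real.log r + Real.log (δ1 + r)) := by
      rw [hA, Real.log_div (by positivity) (by positivity),
        Real.log_mul (by positivity) (by positivity),
        Real.log_mul (by positivity) (by positivity),
        Real.log_mul (by positivity) (by positivity)]
    have hlogp1 : Real.log (1 + r / δ1) = Real.log (δ1 + r) - Real.log δ1 := by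
      rw [show 1 + r / δ1 = (δ1 + r) / δ1 from by field_simp,
        Real.log_div (by positivity) (by positivity)]
    have hlogp2 : Real.log (1 - 1 / δ1) = Real.log (δ1 - 1) - Real.log δ1 := by
      rw [show 1 - 1 / δ1 = (δ1 - 1) / δ1 from by field_simp,
        Real.log_div (by positivity) (by positivity)]
    rw [Real.log_mul (by positivity) (by positivity),
      Real.log_mul (by positivity) (by positivity),
      Real.log_mul (by positivity) (by positivity),
      Real.log_mul (by positivity) (by positivity),
      Real.log_mul (by positivity) (by positivity),
      Real.log_mul (by positivity) (by positivity),
      Real.log_mul (by positivity) (by positivity),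
      Real.log_rpow hApos, Real.log_rpow hβdiv, Real.log_rpow hp1, Real.log_rpow hp2,
      Real.log_div (by positivity) (by positivity),
      hlogA, hlogC2, hlogp1, hlogp2]
    field_simp
    ring
  -- the factor in brackets is less than 1
  have hfac : (βb / βs) ^ (-1 - r / (1 + r))
      * (1 + r / δ1) ^ (1 / (1 + r)) * (1 - 1 / δ1) ^ (r / (1 + r)) < 1 := by
    have hX : (βb / βs) ^ (-1 - r / (1 + r)) < 1 := by
      apply Real.rpow_lt_one_of_one_lt_of_neg
      · rw [lt_div_iff₀ hβs]; linarith
      · have : 0 < r / (1 + r) := by positivity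
        linarith
    have hXpos : 0 < (βb / βs) ^ (-1 - r / (1 + r)) := Real.rpow_pos_of_pos hβdiv _
    have hYZ : (1 + r / δ1) ^ (1 / (1 + r)) * (1 - 1 / δ1) ^ (r / (1 + r)) ≤ 1 := by
      have := Real.geom_mean_le_arith_mean2_weighted
        (by positivity : (0:ℝ) ≤ 1 / (1 + r)) (by positivity : (0:ℝ) ≤ r / (1 + r))
        hp1.le hp2.le (by field_simp)
      calc (1 + r / δ1) ^ (1 / (1 + r)) * (1 - 1 / δ1) ^ (r / (1 + r))
          ≤ 1 / (1 + r) * (1 + r / δ1) + r / (1 + r) * (1 - 1 / δ1) := this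
        _ = 1 := by field_simp; ring
    have hYZpos : 0 < (1 + r / δ1) ^ (1 / (1 + r)) * (1 - 1 / δ1) ^ (r / (1 + r)) := by
      positivity
    nlinarith
  constructor
  · rw [hfyc, hmain]; ring
  · rw [hfyc, hmain]
    nlinarith [mul_pos hβb hδ10]
end

section
/- Define f(y) = C2·(δ1 − δ2)·y^{δ2} + βs·(δ1 − 1)·y − βb·δ1 for y > 0 and let y_c = [βs·(δ1 − 1)/(C2·(−δ2)·(δ1 − δ2))]^{1/(δ2 − 1)}. Then f has exactly two zeros on (0,∞): one in the interval (0, y_c) and one in the interval (y_c, ∞). -/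
set_option maxHeartbeats 1000000 in
/-- f has exactly two zeros on (0,∞): one in (0, y_c) and one in (y_c, ∞). -/
theorem stmt_6 (lam ρ μ1 μ2 δ1 δ2 βs βb C2 yc : ℝ)
    (hlam : 0 < lam) (hμ1 : μ1 < ρ) (hμ2 : μ2 < ρ)
    (hβs : 0 < βs) (hβ : βs < βb)
    (hδ1 : δ1 = (1 + (μ1 - μ2) / lam
      + Real.sqrt ((1 + (μ1 - μ2) / lam) ^ 2 + 4 * (ρ - μ1) / lam)) / 2)
    (hδ2 : δ2 = (1 + (μ1 - μ2) / lam
      - Real.sqrt ((1 + (μ1 - μ2) / lam) ^ 2 + 4 * (ρ - μ1) / lam)) / 2)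
    (hC2 : C2 = (βs / (1 - δ2)) ^ (1 - δ2) * (βb / (-δ2)) ^ δ2)
    (hyc : yc = (βs * (δ1 - 1) / (C2 * (-δ2) * (δ1 - δ2))) ^ (1 / (δ2 - 1)))
    (f : ℝ → ℝ)
    (hf : f = fun y : ℝ => C2 * (δ1 - δ2) * y ^ δ2 + βs * (δ1 - 1) * y - βb * δ1) :
    ∃ a b : ℝ, a ∈ Set.Ioo 0 yc ∧ b ∈ Set.Ioi yc ∧ f a = 0 ∧ f b = 0 ∧
      ∀ y : ℝ, 0 < y → f y = 0 → y = a ∨ y = b := by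
  have hroots : δ2 < 0 ∧ 1 < δ1 := by
    have hd : 0 < (ρ - μ1) / lam := div_pos (by linarith) hlam
    have hd' : 0 < (ρ - μ2) / lam := div_pos (by linarith) hlam
    set s := 1 + (μ1 - μ2) / lam with hs
    have harg : 0 ≤ s ^ 2 + 4 * (ρ - μ1) / lam := by
      have : 4 * (ρ - μ1) / lam = 4 * ((ρ - μ1) / lam) := by ring
      rw [this]; nlinarith [sq_nonneg s]
    set r := Real.sqrt (s ^ 2 + 4 * (ρ - μ1) / lam) with hr
    have hrsq : r ^ 2 = s ^ 2 + 4 * (ρ - μ1) / lam := Real.sq_sqrt harg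
    have hrnn : 0 ≤ r := Real.sqrt_nonneg _
    have hkey1 : r ^ 2 - s ^ 2 = 4 * ((ρ - μ1) / lam) := by rw [hrsq]; ring
    have hkey2 : r ^ 2 - (2 - s) ^ 2 = 4 * ((ρ - μ2) / lam) := by
      rw [hrsq, hs]; field_simp; ring
    constructor
    · rw [hδ2]; nlinarith [hkey1, hd, hrnn, sq_nonneg (s + r)]
    · rw [hδ1]; nlinarith [hkey2, hd', hrnn, sq_nonneg (2 - s + r)]
  obtain ⟨hd2neg, hd1gt⟩ := hroots
  clear hδ1 hδ2
  have hbb : 0 < βb := hβs.trans hβ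
  have h12 : 0 < 1 - δ2 := by linarith
  have h1d2 : 0 < -δ2 := by linarith
  have hd1pos : 0 < δ1 := by linarith
  have hdd : 0 < δ1 - δ2 := by linarith
  have hd11 : 0 < δ1 - 1 := by linarith
  have hC2pos : 0 < C2 := by
    rw [hC2]
    exact mul_pos (Real.rpow_pos_of_pos (div_pos hβs h12) _)
      (Real.rpow_pos_of_pos (div_pos hbb h1d2) _)
  have hd21 : δ2 - 1 < 0 := by linarith
  have hd21ne : δ2 - 1 ≠ 0 := ne_of_lt hd21
  have hfval : ∀ y : ℝ,
      f y = C2 * (δ1 - δ2) * y ^ δ2 + βs * (δ1 - 1) * y - βb * δ1 := by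
    intro y; rw [hf]
  set q : ℝ := βs * (δ1 - 1) / (C2 * (-δ2) * (δ1 - δ2)) with hqdef
  have hden : 0 < C2 * (-δ2) * (δ1 - δ2) := by positivity
  have hq0 : 0 < q := div_pos (by positivity) hden
  have hqB : q * (C2 * (-δ2) * (δ1 - δ2)) = βs * (δ1 - 1) :=
    div_mul_cancel₀ _ (ne_of_gt hden)
  have hycpos : 0 < yc := by rw [hyc]; exact Real.rpow_pos_of_pos hq0 _
  have hyc1 : yc ^ (δ2 - 1) = q := by
    rw [hyc, ← Real.rpow_mul hq0.le, one_div, inv_mul_cancel₀ hd21ne, Real.rpow_one]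
  set e : ℝ := δ2 / (δ2 - 1) with hedef
  have hee : e * (δ2 - 1) = δ2 := div_mul_cancel₀ _ hd21ne
  have hepos : 0 < e := by nlinarith [hee]
  have helt1 : e < 1 := by nlinarith [hee]
  have hyce : yc ^ δ2 = q ^ e := by
    rw [hyc, ← Real.rpow_mul hq0.le, one_div_mul_eq_div, hedef]
  -- value of f at yc
  have hfyc : f yc = C2 * (δ1 - δ2) * (1 - δ2) * q ^ e - βb * δ1 := by
    have h2 : βs * (δ1 - 1) * yc = C2 * (-δ2) * (δ1 - δ2) * yc ^ δ2 := by
      rw [← hqB, ← hyc1]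
      have h3 : yc ^ δ2 = yc ^ (δ2 - 1) * yc := by
        rw [← Real.rpow_add_one (ne_of_gt hycpos)]; ring_nf
      rw [h3]; ring
    rw [hfval, h2, hyce]; ring
  -- the key identity for the minimum value
  have hqe_pos : (0:ℝ) < q ^ e := Real.rpow_pos_of_pos hq0 _
  have hratio : 0 < βs / βb := div_pos hβs hbb
  have hrpos : (0:ℝ) < (βs / βb) ^ e := Real.rpow_pos_of_pos hratio _
  have hGpos1 : (0:ℝ) < (δ1 - 1) ^ e := Real.rpow_pos_of_pos hd11 _
  have hGpos2 : (0:ℝ) < (δ1 - δ2) ^ (1 - e) := Real.rpow_pos_of_pos hdd _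
  have hident : C2 * (δ1 - δ2) * (1 - δ2) * q ^ e
      = βs * (βs / βb) ^ e * ((δ1 - 1) ^ e * (δ1 - δ2) ^ (1 - e)) := by
    have hL : (0:ℝ) < C2 * (δ1 - δ2) * (1 - δ2) * q ^ e := by positivity
    have hR : (0:ℝ) < βs * (βs / βb) ^ e * ((δ1 - 1) ^ e * (δ1 - δ2) ^ (1 - e)) := by
      positivity
    apply Real.log_injOn_pos (Set.mem_Ioi.mpr hL) (Set.mem_Ioi.mpr hR)
    have hlogC2 : Real.log C2
        = (1 - δ2) * (Real.log βs - Real.log (1 - δ2))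
          + δ2 * (Real.log βb - Real.log (-δ2)) := by
      rw [hC2, Real.log_mul (ne_of_gt (Real.rpow_pos_of_pos (div_pos hβs h12) _))
        (ne_of_gt (Real.rpow_pos_of_pos (div_pos hbb h1d2) _)),
        Real.log_rpow (div_pos hβs h12), Real.log_rpow (div_pos hbb h1d2),
        Real.log_div (ne_of_gt hβs) (ne_of_gt h12),
        Real.log_div (ne_of_gt hbb) (ne_of_gt h1d2)]
    have hlogq : Real.log q
        = Real.log βs + Real.log (δ1 - 1)
          - (Real.log C2 + Real.log (-δ2) + Real.log (δ1 - δ2)) := by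
      rw [hqdef, Real.log_div (by positivity) (ne_of_gt hden),
        Real.log_mul (ne_of_gt hβs) (ne_of_gt hd11),
        Real.log_mul (ne_of_gt (mul_pos hC2pos h1d2)) (ne_of_gt hdd),
        Real.log_mul (ne_of_gt hC2pos) (ne_of_gt h1d2)]
    have hlogL : Real.log (C2 * (δ1 - δ2) * (1 - δ2) * q ^ e)
        = Real.log C2 + Real.log (δ1 - δ2) + Real.log (1 - δ2) + e * Real.log q := by
      rw [Real.log_mul (by positivity) (ne_of_gt hqe_pos),
        Real.log_mul (by positivity) (ne_of_gt h12),
        Real.log_mul (ne_of_gt hC2pos) (ne_of_gt hdd), Real.log_rpow hq0]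
    have hlogR : Real.log (βs * (βs / βb) ^ e * ((δ1 - 1) ^ e * (δ1 - δ2) ^ (1 - e)))
        = Real.log βs + e * (Real.log βs - Real.log βb)
          + (e * Real.log (δ1 - 1) + (1 - e) * Real.log (δ1 - δ2)) := by
      rw [Real.log_mul (by positivity) (ne_of_gt (mul_pos hGpos1 hGpos2)),
        Real.log_mul (ne_of_gt hβs) (ne_of_gt hrpos),
        Real.log_mul (ne_of_gt hGpos1) (ne_of_gt hGpos2),
        Real.log_rpow hratio, Real.log_rpow hd11, Real.log_rpow hdd,
        Real.log_div (ne_of_gt hβs) (ne_of_gt hbb)]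
    rw [hlogL, hlogR, hlogq, hlogC2]
    linear_combination (Real.log βs - Real.log βb - Real.log (1 - δ2)
      + Real.log (-δ2)) * hee
  -- AM-GM gives the bound
  have hAM : (δ1 - 1) ^ e * (δ1 - δ2) ^ (1 - e) ≤ δ1 := by
    have h := Real.geom_mean_le_arith_mean2_weighted hepos.le
      (by linarith : (0:ℝ) ≤ 1 - e) hd11.le hdd.le (by ring)
    have hsum : e * (δ1 - 1) + (1 - e) * (δ1 - δ2) = δ1 := by
      linear_combination hee
    linarith [h]
  have hmul : βs * (βs / βb) ^ e < βb := by
    have h1 : (βs / βb) ^ e < 1 :=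
      Real.rpow_lt_one hratio.le ((div_lt_one hbb).mpr hβ) hepos
    calc βs * (βs / βb) ^ e < βs * 1 := mul_lt_mul_of_pos_left h1 hβs
      _ = βs := mul_one βs
      _ < βb := hβ
  have hfyclt : f yc < 0 := by
    rw [hfyc, hident]
    have h5 := mul_le_mul_of_nonneg_left hAM
      (le_of_lt (mul_pos hβs hrpos))
    have h6 := mul_lt_mul_of_pos_right hmul hd1pos
    linarith
  -- continuity and derivative
  have hcont : ∀ y : ℝ, 0 < y → ContinuousAt f y := by
    intro y hy
    rw [hf]
    have h1 : ContinuousAt (fun y : ℝ => y ^ δ2) y :=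
      Real.continuousAt_rpow_const y δ2 (Or.inl (ne_of_gt hy))
    exact ((continuousAt_const.mul h1).add (continuousAt_const.mul continuousAt_id)).sub
      continuousAt_const
  have hcontOn : ∀ s : Set ℝ, s ⊆ Set.Ioi 0 → ContinuousOn f s :=
    fun s hs y hy => (hcont y (hs hy)).continuousWithinAt
  have hderiv : ∀ y : ℝ, 0 < y →
      HasDerivAt f (C2 * (δ1 - δ2) * (δ2 * y ^ (δ2 - 1)) + βs * (δ1 - 1)) y := by
    intro y hy
    rw [hf]
    have h1 : HasDerivAt (fun y : ℝ => y ^ δ2) (δ2 * y ^ (δ2 - 1)) y :=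
      Real.hasDerivAt_rpow_const (Or.inl (ne_of_gt hy))
    simpa using ((h1.const_mul (C2 * (δ1 - δ2))).add
      ((hasDerivAt_id y).const_mul (βs * (δ1 - 1)))).sub_const (βb * δ1)
  have hderiv' : ∀ y : ℝ, 0 < y →
      deriv f y = C2 * (δ1 - δ2) * (δ2 * y ^ (δ2 - 1)) + βs * (δ1 - 1) :=
    fun y hy => (hderiv y hy).deriv
  -- strict antitone on (0, yc]
  have hanti : StrictAntiOn f (Set.Ioc 0 yc) := by
    apply strictAntiOn_of_deriv_neg (convex_Ioc 0 yc) (hcontOn _ (fun y hy => hy.1))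
    intro y hy
    rw [interior_Ioc] at hy
    rw [hderiv' y hy.1]
    have hlt : q < y ^ (δ2 - 1) := by
      rw [← hyc1]; exact Real.rpow_lt_rpow_of_neg hy.1 hy.2 hd21
    have h7 : C2 * (-δ2) * (δ1 - δ2) * q < C2 * (-δ2) * (δ1 - δ2) * y ^ (δ2 - 1) :=
      mul_lt_mul_of_pos_left hlt hden
    have hre : C2 * (δ1 - δ2) * (δ2 * y ^ (δ2 - 1)) + βs * (δ1 - 1)
        = -(C2 * (-δ2) * (δ1 - δ2) * y ^ (δ2 - 1)) + C2 * (-δ2) * (δ1 - δ2) * q := by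
      rw [← hqB]; ring
    rw [hre]; linarith
  -- strict monotone on [yc, ∞)
  have hmono : StrictMonoOn f (Set.Ici yc) := by
    apply strictMonoOn_of_deriv_pos (convex_Ici yc)
      (hcontOn _ (fun y hy => lt_of_lt_of_le hycpos hy))
    intro y hy
    rw [interior_Ici] at hy
    have hy0 : 0 < y := hycpos.trans hy
    rw [hderiv' y hy0]
    have hlt : y ^ (δ2 - 1) < q := by
      rw [← hyc1]; exact Real.rpow_lt_rpow_of_neg hycpos hy hd21
    have h7 : C2 * (-δ2) * (δ1 - δ2) * y ^ (δ2 - 1) < C2 * (-δ2) * (δ1 - δ2) * q :=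
      mul_lt_mul_of_pos_left hlt hden
    have hre : C2 * (δ1 - δ2) * (δ2 * y ^ (δ2 - 1)) + βs * (δ1 - 1)
        = -(C2 * (-δ2) * (δ1 - δ2) * y ^ (δ2 - 1)) + C2 * (-δ2) * (δ1 - δ2) * q := by
      rw [← hqB]; ring
    rw [hre]; linarith
  -- a point ε ∈ (0, yc] with f ε > 0
  have hApos : 0 < C2 * (δ1 - δ2) := mul_pos hC2pos hdd
  set ε1 : ℝ := (βb * δ1 / (C2 * (δ1 - δ2))) ^ (1 / δ2) with he1def
  have hfracpos : 0 < βb * δ1 / (C2 * (δ1 - δ2)) := div_pos (by positivity) hApos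
  have hε1pos : 0 < ε1 := Real.rpow_pos_of_pos hfracpos _
  have hε1d2 : ε1 ^ δ2 = βb * δ1 / (C2 * (δ1 - δ2)) := by
    rw [he1def, ← Real.rpow_mul hfracpos.le, one_div,
      inv_mul_cancel₀ (ne_of_lt hd2neg), Real.rpow_one]
  set ε : ℝ := min ε1 yc with hεdef
  have hεpos : 0 < ε := lt_min hε1pos hycpos
  have hεyc : ε ≤ yc := min_le_right _ _
  have hfε : 0 < f ε := by
    have h8 : ε1 ^ δ2 ≤ ε ^ δ2 :=
      Real.rpow_le_rpow_of_nonpos hεpos (min_le_left _ _) hd2neg.le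
    rw [hε1d2] at h8
    have h9 : βb * δ1 ≤ C2 * (δ1 - δ2) * ε ^ δ2 := by
      calc βb * δ1 = C2 * (δ1 - δ2) * (βb * δ1 / (C2 * (δ1 - δ2))) := by
            field_simp
        _ ≤ C2 * (δ1 - δ2) * ε ^ δ2 := mul_le_mul_of_nonneg_left h8 hApos.le
    rw [hfval]
    have h10 : 0 < βs * (δ1 - 1) * ε := by positivity
    linarith
  -- a point M ∈ [yc, ∞) with f M > 0
  set M : ℝ := max (βb * δ1 / (βs * (δ1 - 1))) yc with hMdef
  have hMyc : yc ≤ M := le_max_right _ _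
  have hMpos : 0 < M := hycpos.trans_le hMyc
  have hfM : 0 < f M := by
    have hBpos : 0 < βs * (δ1 - 1) := mul_pos hβs hd11
    have h10 : βb * δ1 ≤ βs * (δ1 - 1) * M := by
      calc βb * δ1 = βs * (δ1 - 1) * (βb * δ1 / (βs * (δ1 - 1))) := by
            field_simp
        _ ≤ βs * (δ1 - 1) * M :=
            mul_le_mul_of_nonneg_left (le_max_left _ _) hBpos.le
    have h11 : 0 < C2 * (δ1 - δ2) * M ^ δ2 :=
      mul_pos hApos (Real.rpow_pos_of_pos hMpos _)
    rw [hfval]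
    linarith
  -- zeros by IVT
  obtain ⟨a, haI, hfa⟩ := intermediate_value_Icc' hεyc
    (hcontOn _ (fun y hy => lt_of_lt_of_le hεpos hy.1))
    (Set.mem_Icc.mpr ⟨hfyclt.le, hfε.le⟩)
  obtain ⟨b, hbI, hfb⟩ := intermediate_value_Icc hMyc
    (hcontOn _ (fun y hy => lt_of_lt_of_le hycpos hy.1))
    (Set.mem_Icc.mpr ⟨hfyclt.le, hfM.le⟩)
  have hapos : 0 < a := lt_of_lt_of_le hεpos haI.1
  have haycne : a ≠ yc := by
    rintro rfl
    rw [hfa] at hfyclt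
    exact lt_irrefl 0 hfyclt
  have hayc : a < yc := lt_of_le_of_ne haI.2 haycne
  have hbycne : b ≠ yc := by
    rintro rfl
    rw [hfb] at hfyclt
    exact lt_irrefl 0 hfyclt
  have hbyc : yc < b := lt_of_le_of_ne hbI.1 (Ne.symm hbycne)
  refine ⟨a, b, ⟨hapos, hayc⟩, hbyc, hfa, hfb, ?_⟩
  intro y hy hfy
  rcases le_or_gt y yc with hcase | hcase
  · left
    exact hanti.injOn ⟨hy, hcase⟩ ⟨hapos, hayc.le⟩ (by rw [hfy, hfa])
  · right
    exact hmono.injOn (Set.mem_Ici.mpr hcase.le) (Set.mem_Ici.mpr hbyc.le)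
      (by rw [hfy, hfb])
end

section
/- Define f(y) = C2·(δ1 − δ2)·y^{δ2} + βs·(δ1 − 1)·y − βb·δ1 for y > 0 and let a0 = (βs/βb)^{−δ2/(1−δ2)} · (−δ2)/(1 − δ2). Then f(a0) = βb·δ1·[(βs/βb)^{1 + (−δ2)/(1−δ2)} − 1], and f(a0) < 0. -/
/-- with a0 = (βs/βb)^{−δ2/(1−δ2)}·(−δ2)/(1−δ2), one has
f(a0) = βb·δ1·[(βs/βb)^{1 + (−δ2)/(1−δ2)} − 1] < 0. -/
theorem stmt_7 (lam ρ μ1 μ2 δ1 δ2 βs βb C2 a0 : ℝ)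
    (hlam : 0 < lam) (hμ1 : μ1 < ρ) (hμ2 : μ2 < ρ)
    (hβs : 0 < βs) (hβ : βs < βb)
    (hδ1 : δ1 = (1 + (μ1 - μ2) / lam
      + Real.sqrt ((1 + (μ1 - μ2) / lam) ^ 2 + 4 * (ρ - μ1) / lam)) / 2)
    (hδ2 : δ2 = (1 + (μ1 - μ2) / lam
      - Real.sqrt ((1 + (μ1 - μ2) / lam) ^ 2 + 4 * (ρ - μ1) / lam)) / 2)
    (hC2 : C2 = (βs / (1 - δ2)) ^ (1 - δ2) * (βb / (-δ2)) ^ δ2)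
    (ha0 : a0 = (βs / βb) ^ (-δ2 / (1 - δ2)) * (-δ2) / (1 - δ2))
    (f : ℝ → ℝ)
    (hf : f = fun y : ℝ => C2 * (δ1 - δ2) * y ^ δ2 + βs * (δ1 - 1) * y - βb * δ1) :
    f a0 = βb * δ1 * ((βs / βb) ^ (1 + (-δ2) / (1 - δ2)) - 1) ∧ f a0 < 0 := by
  have hβb : 0 < βb := hβs.trans hβ
  set A : ℝ := 1 + (μ1 - μ2) / lam with hA
  have hρ1 : 0 < ρ - μ1 := by linarith
  have hP : 0 < 4 * (ρ - μ1) / lam := by positivity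
  have hDlt : A < Real.sqrt (A ^ 2 + 4 * (ρ - μ1) / lam) := by
    calc A ≤ |A| := le_abs_self A
    _ = Real.sqrt (A ^ 2) := (Real.sqrt_sq_eq_abs A).symm
    _ < _ := Real.sqrt_lt_sqrt (by positivity) (by linarith)
  have hδ2neg : δ2 < 0 := by rw [hδ2]; linarith
  have heq4 : 4 * (μ2 - μ1) / lam = 4 - 4 * A := by rw [hA]; ring
  have key4 : 4 * (μ2 - μ1) / lam < 4 * (ρ - μ1) / lam := by gcongr
  have hδ1gt : 1 < δ1 := by
    have h2 : 2 - A < Real.sqrt (A ^ 2 + 4 * (ρ - μ1) / lam) := by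
      calc 2 - A ≤ |2 - A| := le_abs_self _
      _ = Real.sqrt ((2 - A) ^ 2) := (Real.sqrt_sq_eq_abs _).symm
      _ < _ := Real.sqrt_lt_sqrt (by positivity) (by nlinarith [heq4, key4])
    rw [hδ1]; linarith
  -- abbreviations
  have hs : 0 < -δ2 := by linarith
  have hu : 0 < 1 - δ2 := by linarith
  have hr0 : 0 < βs / βb := by positivity
  have hr1 : βs / βb < 1 := (div_lt_one hβb).mpr hβ
  have he : 0 < 1 + (-δ2) / (1 - δ2) := by positivity
  have ha0pos : 0 < a0 := by
    rw [ha0]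
    have := Real.rpow_pos_of_pos hr0 (-δ2 / (1 - δ2))
    positivity
  have hC2pos : 0 < C2 := by
    rw [hC2]
    have h1 := Real.rpow_pos_of_pos (show (0:ℝ) < βs / (1 - δ2) by positivity) (1 - δ2)
    have h2 := Real.rpow_pos_of_pos (show (0:ℝ) < βb / (-δ2) by positivity) δ2
    positivity
  set R : ℝ := (βs / βb) ^ (1 + (-δ2) / (1 - δ2)) with hR
  have hRpos : 0 < R := Real.rpow_pos_of_pos hr0 _
  -- logs
  have hla : Real.log a0 = (-δ2 / (1 - δ2)) * (Real.log βs - Real.log βb)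
      + Real.log (-δ2) - Real.log (1 - δ2) := by
    rw [ha0, Real.log_div (by positivity) (ne_of_gt hu),
      Real.log_mul (ne_of_gt (Real.rpow_pos_of_pos hr0 _)) (ne_of_gt hs),
      Real.log_rpow hr0, Real.log_div (ne_of_gt hβs) (ne_of_gt hβb)]
  have hlC : Real.log C2 = (1 - δ2) * (Real.log βs - Real.log (1 - δ2))
      + δ2 * (Real.log βb - Real.log (-δ2)) := by
    rw [hC2, Real.log_mul (ne_of_gt (Real.rpow_pos_of_pos (by positivity) _))
        (ne_of_gt (Real.rpow_pos_of_pos (by positivity) _)),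
      Real.log_rpow (by positivity), Real.log_rpow (by positivity),
      Real.log_div (ne_of_gt hβs) (ne_of_gt hu),
      Real.log_div (ne_of_gt hβb) (ne_of_gt hs)]
  have hlR : Real.log R = (1 + -δ2 / (1 - δ2)) * (Real.log βs - Real.log βb) := by
    rw [hR, Real.log_rpow hr0, Real.log_div (ne_of_gt hβs) (ne_of_gt hβb)]
  -- key identity 1 via logs
  have hkey1 : C2 * a0 ^ δ2 = βb * R / (1 - δ2) := by
    have hL : Real.log (C2 * a0 ^ δ2) = Real.log (βb * R / (1 - δ2)) := by
      rw [Real.log_mul (ne_of_gt hC2pos) (ne_of_gt (Real.rpow_pos_of_pos ha0pos δ2)),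
        Real.log_rpow ha0pos, hla, hlC,
        Real.log_div (ne_of_gt (mul_pos hβb hRpos)) (ne_of_gt hu),
        Real.log_mul (ne_of_gt hβb) (ne_of_gt hRpos), hlR]
      field_simp
      ring
    exact Real.log_injOn_pos
      (Set.mem_Ioi.mpr (mul_pos hC2pos (Real.rpow_pos_of_pos ha0pos δ2)))
      (Set.mem_Ioi.mpr (by positivity)) hL
  -- key identity 2
  have hkey2 : βs * a0 = βb * R * (-δ2) / (1 - δ2) := by
    have hsplit : R = (βs / βb) * (βs / βb) ^ (-δ2 / (1 - δ2)) := by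
      rw [hR, Real.rpow_add hr0, Real.rpow_one]
    have hbR : βb * R = βs * (βs / βb) ^ (-δ2 / (1 - δ2)) := by
      rw [hsplit]; field_simp
    rw [ha0, mul_div_assoc, mul_div_assoc, ← mul_assoc, hbR]
  -- assemble
  have expand : f a0 = (δ1 - δ2) * (C2 * a0 ^ δ2) + (δ1 - 1) * (βs * a0) - βb * δ1 := by
    rw [hf]; ring
  rw [hkey1, hkey2] at expand
  have hmain : f a0 = βb * δ1 * (R - 1) := by
    rw [expand]; field_simp; ring
  constructor
  · exact hmain
  · rw [hmain]
    have hRlt : R < 1 := Real.rpow_lt_one (le_of_lt hr0) hr1 he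
    have : 0 < βb * δ1 := mul_pos hβb (by linarith)
    nlinarith
end

section
/- Let k2 be the larger of the two zeros in (0,∞) of f(y) = C2·(δ1 − δ2)·y^{δ2} + βs·(δ1 − 1)·y − βb·δ1. Then k2 > (βs/βb)^{−δ2/(1−δ2)} · (−δ2)/(1 − δ2), hence C2·δ2·k2^{δ2−1} + βs > 0; in particular the constant C1 = (C2·δ2·k2^{δ2−1} + βs)/(δ1·k2^{δ1−1}) is strictly positive. -/
private lemma log_inj_aux {x y : ℝ} (hx : 0 < x) (hy : 0 < y)
    (h : Real.log x = Real.log y) : x = y := by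
  rw [← Real.exp_log hx, ← Real.exp_log hy, h]

/-- βs · m^{1+a} = C2 · a where m is the threshold and C2 the constant. -/
private lemma aux2 (βs βb a : ℝ) (hβs : 0 < βs) (hβb : 0 < βb) (ha : 0 < a) :
    βs * ((βs / βb) ^ (a / (1 + a)) * a / (1 + a)) ^ (1 + a)
      = ((βs / (1 + a)) ^ (1 + a) * (βb / a) ^ (-a)) * a := by
  have h1a : (0:ℝ) < 1 + a := by linarith
  have hu : (0:ℝ) < βs / βb := div_pos hβs hβb
  have huq : (0:ℝ) < (βs / βb) ^ (a / (1 + a)) := Real.rpow_pos_of_pos hu _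
  have hm : (0:ℝ) < (βs / βb) ^ (a / (1 + a)) * a / (1 + a) := by positivity
  apply log_inj_aux (by positivity) (by positivity)
  rw [Real.log_mul hβs.ne' (by positivity), Real.log_rpow hm,
    Real.log_div (by positivity) h1a.ne', Real.log_mul huq.ne' ha.ne',
    Real.log_rpow hu, Real.log_div hβs.ne' hβb.ne',
    Real.log_mul (by positivity) ha.ne',
    Real.log_mul (by positivity) (by positivity),
    Real.log_rpow (div_pos hβs h1a), Real.log_rpow (div_pos hβb ha),
    Real.log_div hβs.ne' h1a.ne', Real.log_div hβb.ne' ha.ne']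
  field_simp
  ring

/-- C2 · m^{-a} = βs · (βs/βb)^{a/(1+a)} / (1+a). -/
private lemma aux1 (βs βb a : ℝ) (hβs : 0 < βs) (hβb : 0 < βb) (ha : 0 < a) :
    ((βs / (1 + a)) ^ (1 + a) * (βb / a) ^ (-a))
      * ((βs / βb) ^ (a / (1 + a)) * a / (1 + a)) ^ (-a)
      = βs * (βs / βb) ^ (a / (1 + a)) / (1 + a) := by
  have h1a : (0:ℝ) < 1 + a := by linarith
  have hu : (0:ℝ) < βs / βb := div_pos hβs hβb
  have huq : (0:ℝ) < (βs / βb) ^ (a / (1 + a)) := Real.rpow_pos_of_pos hu _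
  have hm : (0:ℝ) < (βs / βb) ^ (a / (1 + a)) * a / (1 + a) := by positivity
  apply log_inj_aux (by positivity) (by positivity)
  rw [Real.log_mul (by positivity) (by positivity),
    Real.log_mul (by positivity) (by positivity),
    Real.log_rpow (div_pos hβs h1a), Real.log_rpow (div_pos hβb ha),
    Real.log_rpow hm, Real.log_div hβs.ne' h1a.ne',
    Real.log_div hβb.ne' ha.ne',
    Real.log_div (by positivity : (βs / βb) ^ (a / (1 + a)) * a ≠ 0) h1a.ne',
    Real.log_mul huq.ne' ha.ne',
    Real.log_div (by positivity : βs * (βs / βb) ^ (a / (1 + a)) ≠ 0) h1a.ne',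
    Real.log_mul hβs.ne' huq.ne', Real.log_rpow hu,
    Real.log_div hβs.ne' hβb.ne']
  field_simp
  ring

/-- with k2 the larger zero of f on (0,∞), one has
k2 > (βs/βb)^{−δ2/(1−δ2)}·(−δ2)/(1−δ2), hence C2·δ2·k2^{δ2−1} + βs > 0, and in
particular C1 = (C2·δ2·k2^{δ2−1} + βs)/(δ1·k2^{δ1−1}) > 0. -/
theorem stmt_8 (lam ρ μ1 μ2 δ1 δ2 βs βb C2 k2 : ℝ)
    (hlam : 0 < lam) (hμ1 : μ1 < ρ) (hμ2 : μ2 < ρ)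
    (hβs : 0 < βs) (hβ : βs < βb)
    (hδ1 : δ1 = (1 + (μ1 - μ2) / lam
      + Real.sqrt ((1 + (μ1 - μ2) / lam) ^ 2 + 4 * (ρ - μ1) / lam)) / 2)
    (hδ2 : δ2 = (1 + (μ1 - μ2) / lam
      - Real.sqrt ((1 + (μ1 - μ2) / lam) ^ 2 + 4 * (ρ - μ1) / lam)) / 2)
    (hC2 : C2 = (βs / (1 - δ2)) ^ (1 - δ2) * (βb / (-δ2)) ^ δ2)
    (f : ℝ → ℝ)
    (hf : f = fun y : ℝ => C2 * (δ1 - δ2) * y ^ δ2 + βs * (δ1 - 1) * y - βb * δ1)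
    (hk2pos : 0 < k2) (hk2zero : f k2 = 0)
    (hk2max : ∀ y : ℝ, 0 < y → f y = 0 → y ≤ k2) :
    k2 > (βs / βb) ^ (-δ2 / (1 - δ2)) * (-δ2) / (1 - δ2) ∧
    C2 * δ2 * k2 ^ (δ2 - 1) + βs > 0 ∧
    0 < (C2 * δ2 * k2 ^ (δ2 - 1) + βs) / (δ1 * k2 ^ (δ1 - 1)) := by
  have hβb : 0 < βb := hβs.trans hβ
  -- basic facts about δ1, δ2
  have h1 : 0 < 4 * (ρ - μ1) / lam := by
    have : 0 < ρ - μ1 := sub_pos.mpr hμ1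
    positivity
  have h2 : 0 < 4 * (ρ - μ2) / lam := by
    have : 0 < ρ - μ2 := sub_pos.mpr hμ2
    positivity
  have harg : 0 ≤ (1 + (μ1 - μ2) / lam) ^ 2 + 4 * (ρ - μ1) / lam := by
    nlinarith [sq_nonneg (1 + (μ1 - μ2) / lam)]
  have hsnn : 0 ≤ Real.sqrt ((1 + (μ1 - μ2) / lam) ^ 2 + 4 * (ρ - μ1) / lam) :=
    Real.sqrt_nonneg _
  have hs2 : (Real.sqrt ((1 + (μ1 - μ2) / lam) ^ 2 + 4 * (ρ - μ1) / lam)) ^ 2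
      = (1 + (μ1 - μ2) / lam) ^ 2 + 4 * (ρ - μ1) / lam := Real.sq_sqrt harg
  have hrel : 4 * (ρ - μ1) / lam + 4 * ((μ1 - μ2) / lam) = 4 * (ρ - μ2) / lam := by
    field_simp; ring
  have hδ2neg : δ2 < 0 := by
    rw [hδ2]
    nlinarith [sq_nonneg (Real.sqrt ((1 + (μ1 - μ2) / lam) ^ 2 + 4 * (ρ - μ1) / lam)
      + (1 + (μ1 - μ2) / lam))]
  have hδ1gt : 1 < δ1 := by
    rw [hδ1]
    nlinarith [sq_nonneg (Real.sqrt ((1 + (μ1 - μ2) / lam) ^ 2 + 4 * (ρ - μ1) / lam)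
      + (1 + (μ1 - μ2) / lam) - 2)]
  clear hδ1 hδ2 hs2 hsnn harg h1 h2 hrel hμ1 hμ2 hlam
  obtain ⟨a, ha, hδ2a⟩ : ∃ a : ℝ, 0 < a ∧ δ2 = -a :=
    ⟨-δ2, by linarith, by ring⟩
  have h1a : (0:ℝ) < 1 + a := by linarith
  have hδ1pos : 0 < δ1 := by linarith
  have hu : (0:ℝ) < βs / βb := div_pos hβs hβb
  have huq : (0:ℝ) < (βs / βb) ^ (a / (1 + a)) := Real.rpow_pos_of_pos hu _
  -- rewrite C2
  have hC2' : C2 = (βs / (1 + a)) ^ (1 + a) * (βb / a) ^ (-a) := by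
    rw [hC2, hδ2a, show (1:ℝ) - -a = 1 + a by ring, neg_neg]
  have hC2pos : 0 < C2 := by rw [hC2']; positivity
  -- the threshold m
  have hmeq : (βs / βb) ^ (-δ2 / (1 - δ2)) * (-δ2) / (1 - δ2)
      = (βs / βb) ^ (a / (1 + a)) * a / (1 + a) := by
    rw [hδ2a, show -(-a) / (1 - -a) = a / (1 + a) by ring, neg_neg,
      show (1:ℝ) - -a = 1 + a by ring]
  set m : ℝ := (βs / βb) ^ (a / (1 + a)) * a / (1 + a) with hm
  have hmpos : 0 < m := by positivity
  have hX1 : C2 * m ^ (-a) = βs * (βs / βb) ^ (a / (1 + a)) / (1 + a) := by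
    rw [hC2', hm]
    exact aux1 βs βb a hβs hβb ha
  have hXlt : βs * (βs / βb) ^ (a / (1 + a)) < βb := by
    have hu1 : (βs / βb) ^ (a / (1 + a)) < 1 :=
      Real.rpow_lt_one (le_of_lt hu) ((div_lt_one hβb).mpr hβ) (by positivity)
    nlinarith
  have hfm_eq : f m = δ1 * (βs * (βs / βb) ^ (a / (1 + a)) - βb) := by
    rw [hf]
    show C2 * (δ1 - δ2) * m ^ δ2 + βs * (δ1 - 1) * m - βb * δ1 = _
    rw [hδ2a]
    have : C2 * (δ1 - -a) * m ^ (-a) = (δ1 + a) * (C2 * m ^ (-a)) := by ring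
    rw [this, hX1, hm]
    field_simp
    ring
  have hfm_neg : f m < 0 := by
    rw [hfm_eq]
    exact mul_neg_of_pos_of_neg hδ1pos (by linarith)
  -- a large point where f is positive
  set M0 : ℝ := max (m + 1) (βb * δ1 / (βs * (δ1 - 1)) + 1) with hM0
  have hM0m : m < M0 := lt_of_lt_of_le (lt_add_one m) (le_max_left _ _)
  have hM0pos : 0 < M0 := hmpos.trans hM0m
  have hd : 0 < βs * (δ1 - 1) := mul_pos hβs (by linarith)
  have hfM0 : 0 < f M0 := by
    rw [hf]
    show 0 < C2 * (δ1 - δ2) * M0 ^ δ2 + βs * (δ1 - 1) * M0 - βb * δ1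
    have t1 : 0 < C2 * (δ1 - δ2) * M0 ^ δ2 :=
      mul_pos (mul_pos hC2pos (by linarith)) (Real.rpow_pos_of_pos hM0pos _)
    have h3 : βs * (δ1 - 1) * (βb * δ1 / (βs * (δ1 - 1))) = βb * δ1 :=
      mul_div_cancel₀ _ hd.ne'
    have h4 : βs * (δ1 - 1) * (βb * δ1 / (βs * (δ1 - 1)) + 1) ≤ βs * (δ1 - 1) * M0 :=
      mul_le_mul_of_nonneg_left (le_max_right _ _) hd.le
    nlinarith
  -- IVT gives a zero above m, hence k2 > m
  have hcont : ContinuousOn f (Set.Icc m M0) := by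
    rw [hf]
    apply ContinuousOn.sub _ continuousOn_const
    apply ContinuousOn.add _ (continuousOn_const.mul continuousOn_id)
    apply continuousOn_const.mul
    intro y hy
    exact (Real.continuousAt_rpow_const y δ2
      (Or.inl (ne_of_gt (hmpos.trans_le hy.1)))).continuousWithinAt
  obtain ⟨y0, hy0mem, hy0⟩ :=
    intermediate_value_Icc hM0m.le hcont ⟨hfm_neg.le, hfM0.le⟩
  have hy0m : m ≤ y0 := hy0mem.1
  have hy0ne : m ≠ y0 := by
    intro h
    rw [← h] at hy0
    linarith [hy0.ge]
  have hy0gt : m < y0 := lt_of_le_of_ne hy0m hy0ne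
  have hk2m : m < k2 := lt_of_lt_of_le hy0gt (hk2max y0 (hmpos.trans hy0gt) hy0)
  have hnum : 0 < C2 * δ2 * k2 ^ (δ2 - 1) + βs := by
    have hkey : βs * m ^ (1 + a) = C2 * a := by
      rw [hC2', hm]
      exact aux2 βs βb a hβs hβb ha
    have hk2a : m ^ (1 + a) < k2 ^ (1 + a) :=
      Real.rpow_lt_rpow hmpos.le hk2m h1a
    have hk2p : 0 < k2 ^ (1 + a) := Real.rpow_pos_of_pos hk2pos _
    have hlt : C2 * a < βs * k2 ^ (1 + a) := by
      rw [← hkey]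
      exact mul_lt_mul_of_pos_left hk2a hβs
    have hpow : k2 ^ (δ2 - 1) = (k2 ^ (1 + a))⁻¹ := by
      rw [show δ2 - 1 = -(1 + a) by rw [hδ2a]; ring, Real.rpow_neg hk2pos.le]
    rw [hpow, hδ2a]
    have h5 : C2 * a * (k2 ^ (1 + a))⁻¹ < βs := by
      rw [← div_eq_mul_inv, div_lt_iff₀ hk2p]
      linarith
    have h6 : C2 * -a * (k2 ^ (1 + a))⁻¹ = -(C2 * a * (k2 ^ (1 + a))⁻¹) := by ring
    rw [h6]
    linarith
  refine ⟨by rw [hmeq]; exact hk2m, hnum, ?_⟩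
  exact div_pos hnum (mul_pos hδ1pos (Real.rpow_pos_of_pos hk2pos _))
end

section
/- Let k2 be the larger of the two zeros in (0,∞) of f(y) = C2·(δ1 − δ2)·y^{δ2} + βs·(δ1 − 1)·y − βb·δ1. Then f(((ρ−μ1)/(ρ−μ2))·(βb/βs)) < 0, hence k2 > ((ρ−μ1)/(ρ−μ2))·(βb/βs); consequently (ρ − μ2)·βs·y − (ρ − μ1)·βb ≥ 0 for every y ≥ k2. -/
set_option maxHeartbeats 800000 in
lemma aux9 (δ1 δ2 βs βb A : ℝ) (h1 : 1 < δ1) (h2 : δ2 < 0) (hs : 0 < βs) (hb : βs < βb)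
    (hA : A = δ1 * (-δ2) * βb / ((δ1 - 1) * (1 - δ2) * βs)) :
    (βs / (1 - δ2)) ^ (1 - δ2) * (βb / (-δ2)) ^ δ2 * (δ1 - δ2) * A ^ δ2
      + βs * (δ1 - 1) * A - βb * δ1 < 0 := by
  have hβb : (0:ℝ) < βb := lt_trans hs hb
  have h1d2 : (0:ℝ) < 1 - δ2 := by linarith
  have ht : (0:ℝ) < -δ2 := by linarith
  have hδ1pos : (0:ℝ) < δ1 := by linarith
  have hd11 : (0:ℝ) < δ1 - 1 := by linarith
  have hδ2ne : δ2 ≠ 0 := ne_of_lt h2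
  have hne1 : δ1 - 1 ≠ 0 := hd11.ne'
  have hne2 : (1:ℝ) - δ2 ≠ 0 := h1d2.ne'
  have hApos : 0 < A := by rw [hA]; positivity
  have hlin : βs * (δ1 - 1) * A - βb * δ1 = -(βb * δ1 / (1 - δ2)) := by
    rw [hA]; field_simp [hδ2ne, hne1, hne2, hs.ne']; ring
  have hP : (0:ℝ) < βs / (1 - δ2) := by positivity
  have hQb : (0:ℝ) < βb / (-δ2) := by positivity
  set P : ℝ := βs / (1 - δ2) with hPdef
  set R : ℝ := βb ^ 2 * δ1 / ((δ1 - 1) * (1 - δ2) * βs) with hRdef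
  have hRpos : 0 < R := by rw [hRdef]; positivity
  have step1 : βb / (-δ2) * A = R := by
    rw [hA, hRdef]; field_simp [hδ2ne, hne1, hne2, hs.ne']
  have step2 : (βb / (-δ2)) ^ δ2 * A ^ δ2 = R ^ δ2 := by
    rw [← Real.mul_rpow hQb.le hApos.le, step1]
  have step3 : R ^ δ2 = (R ^ (-δ2))⁻¹ := by
    rw [← Real.rpow_neg hRpos.le, neg_neg]
  have step4 : P ^ (1 - δ2) = P * P ^ (-δ2) := by
    rw [show (1 - δ2) = 1 + (-δ2) by ring, Real.rpow_add hP, Real.rpow_one]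
  have step5 : P ^ (-δ2) / R ^ (-δ2) = (P / R) ^ (-δ2) :=
    (Real.div_rpow hP.le hRpos.le _).symm
  have step6 : P / R = (βs / βb) ^ (2:ℕ) * ((δ1 - 1) / δ1) := by
    rw [hPdef, hRdef]; field_simp [hδ2ne, hne1, hne2, hs.ne', hβb.ne', hδ1pos.ne']
  have hwpos : (0:ℝ) < (δ1 - 1) / δ1 := by positivity
  have hrpos : (0:ℝ) < βs / βb := by positivity
  have step7 : (P / R) ^ (-δ2)
      = ((βs / βb) ^ (2:ℕ)) ^ (-δ2) * ((δ1 - 1) / δ1) ^ (-δ2) := by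
    rw [step6, Real.mul_rpow (by positivity) hwpos.le]
  have step8 : ((βs / βb) ^ (2:ℕ)) ^ (-δ2) = (βs / βb) ^ (2 * (-δ2)) := by
    rw [← Real.rpow_natCast (βs / βb) 2, ← Real.rpow_mul hrpos.le]
    norm_num
  -- Bernoulli chain
  have hw : (δ1 - 1) / δ1 ≤ Real.exp (-(1 / δ1)) := by
    have h := Real.add_one_le_exp (-(1 / δ1))
    have heq : (δ1 - 1) / δ1 = 1 - 1 / δ1 := by field_simp
    rw [heq]; linarith
  have hwt : ((δ1 - 1) / δ1) ^ (-δ2) ≤ Real.exp (-(1 / δ1)) ^ (-δ2) :=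
    Real.rpow_le_rpow hwpos.le hw ht.le
  have hexp : Real.exp (-(1 / δ1)) ^ (-δ2) = Real.exp (-(1 / δ1) * (-δ2)) :=
    (Real.exp_mul _ _).symm
  have hber : Real.exp (-(1 / δ1) * (-δ2)) * (δ1 - δ2) ≤ δ1 := by
    have h1' : (-δ2) / δ1 + 1 ≤ Real.exp ((-δ2) / δ1) := Real.add_one_le_exp _
    have h2' : Real.exp (-(1 / δ1) * (-δ2)) * Real.exp ((-δ2) / δ1) = 1 := by
      rw [← Real.exp_add, show -(1 / δ1) * (-δ2) + (-δ2) / δ1 = 0 by field_simp; ring]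
      exact Real.exp_zero
    have h3' : δ1 - δ2 ≤ δ1 * Real.exp ((-δ2) / δ1) := by
      have hh := mul_le_mul_of_nonneg_left h1' hδ1pos.le
      have he : δ1 * ((-δ2) / δ1 + 1) = δ1 - δ2 := by field_simp; ring
      nlinarith [hh, he]
    nlinarith [Real.exp_pos (-(1 / δ1) * (-δ2)), Real.exp_pos ((-δ2) / δ1)]
  have hWd : ((δ1 - 1) / δ1) ^ (-δ2) * (δ1 - δ2) ≤ δ1 := by
    have hd : (0:ℝ) < δ1 - δ2 := by linarith
    calc ((δ1 - 1) / δ1) ^ (-δ2) * (δ1 - δ2)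
        ≤ Real.exp (-(1 / δ1)) ^ (-δ2) * (δ1 - δ2) :=
          mul_le_mul_of_nonneg_right hwt hd.le
      _ = Real.exp (-(1 / δ1) * (-δ2)) * (δ1 - δ2) := by rw [hexp]
      _ ≤ δ1 := hber
  -- small factor
  have hr1 : (βs / βb) ^ (1 + 2 * (-δ2)) < 1 :=
    Real.rpow_lt_one hrpos.le (by rw [div_lt_one hβb]; exact hb) (by linarith)
  have hsplit2 : (βs / βb) ^ (1 + 2 * (-δ2)) = (βs / βb) * (βs / βb) ^ (2 * (-δ2)) := by
    rw [Real.rpow_add hrpos, Real.rpow_one]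
  have hx : βs * (βs / βb) ^ (2 * (-δ2)) < βb := by
    have h := hr1
    rw [hsplit2] at h
    have h2'' := mul_lt_mul_of_pos_left h hβb
    rw [mul_one] at h2''
    have he : βb * (βs / βb * (βs / βb) ^ (2 * (-δ2)))
        = βs * (βs / βb) ^ (2 * (-δ2)) := by
      field_simp
    linarith [he ▸ h2'']
  -- assemble key inequality
  have hX2 : (0:ℝ) < (βs / βb) ^ (2 * (-δ2)) := Real.rpow_pos_of_pos hrpos _
  have hW : (0:ℝ) < ((δ1 - 1) / δ1) ^ (-δ2) := Real.rpow_pos_of_pos hwpos _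
  have hWd2 : (0:ℝ) < ((δ1 - 1) / δ1) ^ (-δ2) * (δ1 - δ2) := by
    apply mul_pos hW; linarith
  have hkey : P ^ (1 - δ2) * (βb / (-δ2)) ^ δ2 * (δ1 - δ2) * A ^ δ2 < βb * δ1 / (1 - δ2) := by
    have heq : P ^ (1 - δ2) * (βb / (-δ2)) ^ δ2 * (δ1 - δ2) * A ^ δ2
        = P * ((βs / βb) ^ (2 * (-δ2)) * (((δ1 - 1) / δ1) ^ (-δ2) * (δ1 - δ2))) := by
      rw [show P ^ (1 - δ2) * (βb / (-δ2)) ^ δ2 * (δ1 - δ2) * A ^ δ2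
          = P ^ (1 - δ2) * ((βb / (-δ2)) ^ δ2 * A ^ δ2) * (δ1 - δ2) by ring,
        step2, step3, step4]
      rw [show P * P ^ (-δ2) * (R ^ (-δ2))⁻¹ * (δ1 - δ2)
          = P * (P ^ (-δ2) / R ^ (-δ2)) * (δ1 - δ2) by ring]
      rw [step5, step7, step8]
      ring
    rw [heq, lt_div_iff₀ h1d2]
    have heq2 : P * ((βs / βb) ^ (2 * (-δ2)) * (((δ1 - 1) / δ1) ^ (-δ2) * (δ1 - δ2))) * (1 - δ2)
        = (βs * (βs / βb) ^ (2 * (-δ2))) * (((δ1 - 1) / δ1) ^ (-δ2) * (δ1 - δ2)) := by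
      rw [hPdef]; field_simp
    rw [heq2]
    calc (βs * (βs / βb) ^ (2 * (-δ2))) * (((δ1 - 1) / δ1) ^ (-δ2) * (δ1 - δ2))
        < βb * (((δ1 - 1) / δ1) ^ (-δ2) * (δ1 - δ2)) :=
          mul_lt_mul_of_pos_right hx hWd2
      _ ≤ βb * δ1 := mul_le_mul_of_nonneg_left hWd hβb.le
  linarith [hkey]


lemma deltas9 (lam ρ μ1 μ2 δ1 δ2 : ℝ)
    (hlam : 0 < lam) (hμ1 : μ1 < ρ) (hμ2 : μ2 < ρ)
    (hδ1 : δ1 = (1 + (μ1 - μ2) / lam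
      + Real.sqrt ((1 + (μ1 - μ2) / lam) ^ 2 + 4 * (ρ - μ1) / lam)) / 2)
    (hδ2 : δ2 = (1 + (μ1 - μ2) / lam
      - Real.sqrt ((1 + (μ1 - μ2) / lam) ^ 2 + 4 * (ρ - μ1) / lam)) / 2) :
    1 < δ1 ∧ δ2 < 0 ∧ δ1 * (-δ2) = (ρ - μ1) / lam ∧ (δ1 - 1) * (1 - δ2) = (ρ - μ2) / lam := by
  have hρ1 : (0:ℝ) < ρ - μ1 := by linarith
  have hρ2 : (0:ℝ) < ρ - μ2 := by linarith
  set b : ℝ := 1 + (μ1 - μ2) / lam with hbdef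
  set s : ℝ := Real.sqrt (b ^ 2 + 4 * (ρ - μ1) / lam) with hsdef
  have hc : (0:ℝ) < 4 * (ρ - μ1) / lam := by positivity
  have hs0 : 0 ≤ s := Real.sqrt_nonneg _
  have hs2 : s ^ 2 = b ^ 2 + 4 * (ρ - μ1) / lam :=
    Real.sq_sqrt (by nlinarith [sq_nonneg b])
  have hsum : δ1 + δ2 = b := by rw [hδ1, hδ2]; ring
  have hprod : δ1 * δ2 = -((ρ - μ1) / lam) := by
    rw [hδ1, hδ2]; linear_combination (-(1:ℝ)/4) * hs2
  have hc2 : (0:ℝ) < 4 * (ρ - μ2) / lam := by positivity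
  have hcb : 4 * (ρ - μ1) / lam + 4 * b - 4 = 4 * (ρ - μ2) / lam := by
    rw [hbdef]; field_simp; ring
  have hkey : 2 < b + s := by
    by_contra h
    push_neg at h
    have h1 : s ≤ 2 - b := by linarith
    have h2 : 0 ≤ 2 - b := le_trans hs0 h1
    have h3 : s ^ 2 ≤ (2 - b) ^ 2 := by nlinarith
    nlinarith
  have hδ1gt : 1 < δ1 := by rw [hδ1]; linarith
  have hbs : b < s := by nlinarith
  have hδ2neg : δ2 < 0 := by rw [hδ2]; linarith
  have hden : (δ1 - 1) * (1 - δ2) = (ρ - μ2) / lam := by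
    linear_combination hsum - hprod + hbdef
  have hnum : δ1 * (-δ2) = (ρ - μ1) / lam := by linear_combination -hprod
  exact ⟨hδ1gt, hδ2neg, hnum, hden⟩


set_option maxHeartbeats 800000 in
/-- with k2 the larger zero of f on (0,∞),
f(((ρ−μ1)/(ρ−μ2))·(βb/βs)) < 0, hence k2 > ((ρ−μ1)/(ρ−μ2))·(βb/βs), and consequently
(ρ−μ2)·βs·y − (ρ−μ1)·βb ≥ 0 for every y ≥ k2. -/
theorem stmt_9 (lam ρ μ1 μ2 δ1 δ2 βs βb C2 k2 : ℝ)
    (hlam : 0 < lam) (hμ1 : μ1 < ρ) (hμ2 : μ2 < ρ)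
    (hβs : 0 < βs) (hβ : βs < βb)
    (hδ1 : δ1 = (1 + (μ1 - μ2) / lam
      + Real.sqrt ((1 + (μ1 - μ2) / lam) ^ 2 + 4 * (ρ - μ1) / lam)) / 2)
    (hδ2 : δ2 = (1 + (μ1 - μ2) / lam
      - Real.sqrt ((1 + (μ1 - μ2) / lam) ^ 2 + 4 * (ρ - μ1) / lam)) / 2)
    (hC2 : C2 = (βs / (1 - δ2)) ^ (1 - δ2) * (βb / (-δ2)) ^ δ2)
    (f : ℝ → ℝ)
    (hf : f = fun y : ℝ => C2 * (δ1 - δ2) * y ^ δ2 + βs * (δ1 - 1) * y - βb * δ1)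
    (hk2pos : 0 < k2) (hk2zero : f k2 = 0)
    (hk2max : ∀ y : ℝ, 0 < y → f y = 0 → y ≤ k2) :
    f ((ρ - μ1) / (ρ - μ2) * (βb / βs)) < 0 ∧
    k2 > (ρ - μ1) / (ρ - μ2) * (βb / βs) ∧
    ∀ y : ℝ, k2 ≤ y → 0 ≤ (ρ - μ2) * βs * y - (ρ - μ1) * βb := by
  obtain ⟨hδ1gt, hδ2neg, hnum, hden⟩ := deltas9 lam ρ μ1 μ2 δ1 δ2 hlam hμ1 hμ2 hδ1 hδ2
  clear hδ1 hδ2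
  have hρ1 : (0:ℝ) < ρ - μ1 := by linarith
  have hρ2 : (0:ℝ) < ρ - μ2 := by linarith
  have hβb : (0:ℝ) < βb := lt_trans hβs hβ
  have h1d2 : (0:ℝ) < 1 - δ2 := by linarith
  have hδ1pos : (0:ℝ) < δ1 := by linarith
  have hd11 : (0:ℝ) < δ1 - 1 := by linarith
  set A : ℝ := (ρ - μ1) / (ρ - μ2) * (βb / βs) with hAdef
  have hApos : 0 < A := by rw [hAdef]; positivity
  have hAeq : A = δ1 * (-δ2) * βb / ((δ1 - 1) * (1 - δ2) * βs) := by
    rw [hAdef, hden, hnum]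
    field_simp
  have hC2pos : 0 < C2 := by
    rw [hC2]
    exact mul_pos (Real.rpow_pos_of_pos (div_pos hβs h1d2) _)
      (Real.rpow_pos_of_pos (div_pos hβb (by linarith : (0:ℝ) < -δ2)) _)
  have hfA : f A < 0 := by
    rw [hf]
    show C2 * (δ1 - δ2) * A ^ δ2 + βs * (δ1 - 1) * A - βb * δ1 < 0
    rw [hC2]
    exact aux9 δ1 δ2 βs βb A hδ1gt hδ2neg hβs hβ hAeq
  -- part 2 : find a zero above A via IVT
  set M : ℝ := max (A + 1) (βb * δ1 / (βs * (δ1 - 1)) + 1) with hMdef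
  have hM1 : A + 1 ≤ M := le_max_left _ _
  have hM2 : βb * δ1 / (βs * (δ1 - 1)) + 1 ≤ M := le_max_right _ _
  have hAM : A ≤ M := by linarith
  have hMpos : 0 < M := by linarith
  have hfM : 0 < f M := by
    rw [hf]
    show 0 < C2 * (δ1 - δ2) * M ^ δ2 + βs * (δ1 - 1) * M - βb * δ1
    have ht1 : 0 < C2 * (δ1 - δ2) * M ^ δ2 :=
      mul_pos (mul_pos hC2pos (by linarith)) (Real.rpow_pos_of_pos hMpos δ2)
    have hq : βs * (δ1 - 1) * (βb * δ1 / (βs * (δ1 - 1))) = βb * δ1 := by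
      field_simp
    have hpos2 : 0 < βs * (δ1 - 1) := mul_pos hβs hd11
    have hexp2 : βs * (δ1 - 1) * (βb * δ1 / (βs * (δ1 - 1)) + 1)
        = βb * δ1 + βs * (δ1 - 1) := by rw [mul_add, hq, mul_one]
    have hmle := mul_le_mul_of_nonneg_left hM2 hpos2.le
    have ht2 : βb * δ1 < βs * (δ1 - 1) * M := by
      rw [hexp2] at hmle; linarith
    linarith
  have hcont : ContinuousOn f (Set.Icc A M) := by
    rw [hf]
    apply ContinuousOn.sub
    · apply ContinuousOn.add
      · exact continuousOn_const.mul (ContinuousOn.rpow_const continuousOn_id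
          (fun x hx => Or.inl (ne_of_gt (lt_of_lt_of_le hApos hx.1))))
      · exact continuousOn_const.mul (continuousOn_id)
    · exact continuousOn_const
  have h0mem : (0:ℝ) ∈ Set.Icc (f A) (f M) := ⟨hfA.le, hfM.le⟩
  obtain ⟨c, hcmem, hfc⟩ := intermediate_value_Icc hAM hcont h0mem
  have hcA : A < c := by
    rcases lt_or_eq_of_le hcmem.1 with h | h
    · exact h
    · exfalso; rw [← h] at hfc; linarith
  have hck2 : c ≤ k2 := hk2max c (lt_trans hApos hcA) hfc
  have hk2A : k2 > A := lt_of_lt_of_le hcA hck2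
  refine ⟨hfA, hk2A, ?_⟩
  -- part 3
  have hAval : (ρ - μ2) * βs * A = (ρ - μ1) * βb := by
    rw [hAdef]; field_simp
  intro y hy
  have h5 : A ≤ y := le_of_lt (lt_of_lt_of_le hk2A hy)
  have h6 : (ρ - μ2) * βs * A ≤ (ρ - μ2) * βs * y :=
    mul_le_mul_of_nonneg_left h5 (mul_pos hρ2 hβs).le
  linarith
end

section
/- Let k1 = (βs/βb)·(−δ2)/(1 − δ2). Then for every y with 0 < y ≤ k1, one has (ρ − μ1)·βs − (ρ − μ2)·βb·y ≥ 0. Equivalently, k1 ≤ ((ρ−μ1)/(ρ−μ2))·(βs/βb). -/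
/-- with k1 = (βs/βb)·(−δ2)/(1−δ2), for 0 < y ≤ k1 one has
(ρ−μ1)·βs − (ρ−μ2)·βb·y ≥ 0; equivalently k1 ≤ ((ρ−μ1)/(ρ−μ2))·(βs/βb). -/
theorem stmt_10 (lam ρ μ1 μ2 δ1 δ2 βs βb : ℝ)
    (hlam : 0 < lam) (hμ1 : μ1 < ρ) (hμ2 : μ2 < ρ)
    (hβs : 0 < βs) (hβ : βs < βb)
    (hδ1 : δ1 = (1 + (μ1 - μ2) / lam
      + Real.sqrt ((1 + (μ1 - μ2) / lam) ^ 2 + 4 * (ρ - μ1) / lam)) / 2)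
    (hδ2 : δ2 = (1 + (μ1 - μ2) / lam
      - Real.sqrt ((1 + (μ1 - μ2) / lam) ^ 2 + 4 * (ρ - μ1) / lam)) / 2) :
    (∀ y : ℝ, 0 < y → y ≤ (βs / βb) * (-δ2) / (1 - δ2) →
      0 ≤ (ρ - μ1) * βs - (ρ - μ2) * βb * y) ∧
    (βs / βb) * (-δ2) / (1 - δ2) ≤ (ρ - μ1) / (ρ - μ2) * (βs / βb) := by
  set b : ℝ := 1 + (μ1 - μ2) / lam with hb
  set q : ℝ := (ρ - μ1) / lam with hq
  have hlamne : lam ≠ 0 := ne_of_gt hlam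
  have hqpos : 0 < q := div_pos (by linarith) hlam
  have hA : 0 ≤ b ^ 2 + 4 * (ρ - μ1) / lam := by
    have h4 : 4 * (ρ - μ1) / lam = 4 * q := by rw [hq]; ring
    nlinarith [sq_nonneg b]
  set s : ℝ := Real.sqrt (b ^ 2 + 4 * (ρ - μ1) / lam) with hsdef
  have hs : 0 ≤ s := Real.sqrt_nonneg _
  have hs2 : s ^ 2 = b ^ 2 + 4 * q := by
    rw [hsdef, Real.sq_sqrt hA, hq]; ring
  have hqbl : 0 < q + b - 1 := by
    have h5 : q + b - 1 = (ρ - μ2) / lam := by rw [hq, hb]; field_simp; ring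
    rw [h5]; exact div_pos (by linarith) hlam
  have hmu1eq : ρ - μ1 = lam * q := by rw [hq]; field_simp
  have hmu2eq : ρ - μ2 = lam * (q + b - 1) := by rw [hq, hb]; field_simp; ring
  clear_value b q s
  have hδ1g : 1 < δ1 := by
    rw [hδ1]
    have hsgt : 2 - b < s := by nlinarith
    linarith
  have hδ2l : δ2 < 0 := by
    rw [hδ2]
    have hsgt : b < s := by nlinarith
    linarith
  have h1δ2 : 0 < 1 - δ2 := by linarith
  have hprod : lam * ((δ1 - 1) * (1 - δ2)) = ρ - μ2 := by
    rw [hδ1, hδ2, hmu2eq]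
    linear_combination (lam / 4) * hs2
  have hprod2 : lam * (δ1 * (-δ2)) = ρ - μ1 := by
    rw [hδ1, hδ2, hmu1eq]
    linear_combination (lam / 4) * hs2
  have hratio : (-δ2) / (1 - δ2) ≤ (ρ - μ1) / (ρ - μ2) := by
    rw [div_le_div_iff₀ h1δ2 (by linarith)]
    nlinarith [mul_nonneg (mul_nonneg hlam.le (by linarith : (0:ℝ) ≤ -δ2)) h1δ2.le]
  have hbbpos : 0 < βb := lt_trans hβs hβ
  have hbs : 0 ≤ βs / βb := le_of_lt (div_pos hβs hbbpos)
  have hkey : (βs / βb) * (-δ2) / (1 - δ2) ≤ (ρ - μ1) / (ρ - μ2) * (βs / βb) := by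
    have h1 : (βs / βb) * (-δ2) / (1 - δ2) = (βs / βb) * ((-δ2) / (1 - δ2)) := by
      ring
    rw [h1, mul_comm ((ρ - μ1) / (ρ - μ2)) (βs / βb)]
    exact mul_le_mul_of_nonneg_left hratio hbs
  refine ⟨fun y hy hyk => ?_, hkey⟩
  have hle : y ≤ (ρ - μ1) / (ρ - μ2) * (βs / βb) := le_trans hyk hkey
  have hne1 : ρ - μ2 ≠ 0 := by linarith
  have hne2 : βb ≠ 0 := ne_of_gt hbbpos
  have heq : (ρ - μ1) / (ρ - μ2) * (βs / βb) * ((ρ - μ2) * βb) = (ρ - μ1) * βs := by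
    field_simp
  have hpos : 0 < (ρ - μ2) * βb := mul_pos (by linarith) hbbpos
  have hmul := mul_le_mul_of_nonneg_right hle hpos.le
  rw [heq] at hmul
  nlinarith [hmul]
end

section
/- Let k1 = (βs/βb)·(−δ2)/(1 − δ2) and define g(y) = C2·y^{δ2} + βb·y − βs for y > 0. Then g(k1) = 0, g'(y) ≥ 0 if and only if y ≥ k1, g is monotone nondecreasing on [k1, ∞), and consequently g(y) ≥ 0 for every y ≥ k1. -/
/-- with k1 = (βs/βb)·(−δ2)/(1−δ2) and g(y) = C2·y^{δ2} + βb·y − βs,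
one has g(k1) = 0, for y > 0: g'(y) ≥ 0 iff y ≥ k1, g is monotone nondecreasing on
[k1,∞), and g(y) ≥ 0 for every y ≥ k1. -/
theorem stmt_11 (lam ρ μ1 μ2 δ1 δ2 βs βb C2 k1 : ℝ)
    (hlam : 0 < lam) (hμ1 : μ1 < ρ) (hμ2 : μ2 < ρ)
    (hβs : 0 < βs) (hβ : βs < βb)
    (hδ1 : δ1 = (1 + (μ1 - μ2) / lam
      + Real.sqrt ((1 + (μ1 - μ2) / lam) ^ 2 + 4 * (ρ - μ1) / lam)) / 2)
    (hδ2 : δ2 = (1 + (μ1 - μ2) / lam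
      - Real.sqrt ((1 + (μ1 - μ2) / lam) ^ 2 + 4 * (ρ - μ1) / lam)) / 2)
    (hC2 : C2 = (βs / (1 - δ2)) ^ (1 - δ2) * (βb / (-δ2)) ^ δ2)
    (hk1 : k1 = (βs / βb) * (-δ2) / (1 - δ2))
    (g : ℝ → ℝ)
    (hg : g = fun y : ℝ => C2 * y ^ δ2 + βb * y - βs) :
    g k1 = 0 ∧
    (∀ y : ℝ, 0 < y → (0 ≤ deriv g y ↔ k1 ≤ y)) ∧
    MonotoneOn g (Set.Ici k1) ∧
    (∀ y : ℝ, k1 ≤ y → 0 ≤ g y) := by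
  have hβb : 0 < βb := hβs.trans hβ
  -- δ2 < 0
  have key : ∀ A B : ℝ, 0 < B → (A - Real.sqrt (A ^ 2 + B)) / 2 < 0 := by
    intro A B hB
    have h1 : A ≤ |A| := le_abs_self A
    have h2 : |A| = Real.sqrt (A ^ 2) := (Real.sqrt_sq_eq_abs A).symm
    have h3 : Real.sqrt (A ^ 2) < Real.sqrt (A ^ 2 + B) :=
      Real.sqrt_lt_sqrt (sq_nonneg A) (by linarith)
    linarith
  have hδ2neg : δ2 < 0 := by
    rw [hδ2]
    exact key _ _ (div_pos (by linarith) hlam)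
  have h1δ2 : 0 < 1 - δ2 := by linarith
  have hk1pos : 0 < k1 := by
    rw [hk1]
    exact div_pos (mul_pos (div_pos hβs hβb) (neg_pos.mpr hδ2neg)) h1δ2
  -- set a, b
  set a : ℝ := βs / (1 - δ2) with ha
  set b : ℝ := βb / (-δ2) with hb
  have hapos : 0 < a := div_pos hβs h1δ2
  have hbpos : 0 < b := div_pos hβb (by linarith)
  have hδ0 : δ2 ≠ 0 := hδ2neg.ne
  have hk1ab : k1 = a / b := by
    rw [hk1, ha, hb, div_div_div_comm]
    rw [div_eq_div_iff (by positivity) (by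
      exact div_ne_zero h1δ2.ne' (neg_ne_zero.mpr hδ0))]
    field_simp
  have hC2pos : 0 < C2 := by rw [hC2]; positivity
  -- C2 * k1 ^ δ2 = a
  have hbz : b ^ δ2 ≠ 0 := (Real.rpow_pos_of_pos hbpos δ2).ne'
  have hkey : C2 * k1 ^ δ2 = a := by
    have h1 : C2 * k1 ^ δ2 = a ^ (1 - δ2) * a ^ δ2 := by
      rw [hC2, hk1ab, Real.div_rpow hapos.le hbpos.le]
      field_simp
    rw [h1, ← Real.rpow_add hapos]
    norm_num
  have hkey2 : C2 * k1 ^ (δ2 - 1) = b := by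
    rw [show δ2 - 1 = δ2 + (-1) by ring, Real.rpow_add hk1pos, ← mul_assoc, hkey,
      Real.rpow_neg_one, hk1ab]
    field_simp
  -- g k1 = 0
  have hgk1 : g k1 = 0 := by
    rw [hg]
    simp only
    rw [hkey, hk1ab, ha, hb]
    field_simp
    ring
  -- deriv
  have hderiv : ∀ y : ℝ, 0 < y → deriv g y = C2 * (δ2 * y ^ (δ2 - 1)) + βb := by
    intro y hy
    have h1 : HasDerivAt (fun x : ℝ => x ^ δ2) (δ2 * y ^ (δ2 - 1)) y :=
      Real.hasDerivAt_rpow_const (Or.inl hy.ne')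
    have h2 : HasDerivAt g (C2 * (δ2 * y ^ (δ2 - 1)) + βb) y := by
      rw [hg]
      simpa using (((h1.const_mul C2).add ((hasDerivAt_id y).const_mul βb)).sub_const βs)
    exact h2.deriv
  have hiff : ∀ y : ℝ, 0 < y → (0 ≤ deriv g y ↔ k1 ≤ y) := by
    intro y hy
    rw [hderiv y hy]
    have hbk : C2 * (δ2 * k1 ^ (δ2 - 1)) + βb = 0 := by
      have : C2 * (δ2 * k1 ^ (δ2 - 1)) = δ2 * b := by rw [← hkey2]; ring
      rw [this, hb]
      field_simp [hδ0]
      ring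
    constructor
    · intro h
      by_contra hlt
      push_neg at hlt
      have hmono : k1 ^ (δ2 - 1) < y ^ (δ2 - 1) := by
        have := (Real.rpow_le_rpow_iff_of_neg hk1pos hy (by linarith : δ2 - 1 < 0)).mpr
        -- we need strict; use lt version
        have hstrict : y ^ (δ2 - 1) ≤ k1 ^ (δ2 - 1) ↔ k1 ≤ y :=
          Real.rpow_le_rpow_iff_of_neg hy hk1pos (by linarith)
        rcases lt_or_ge (k1 ^ (δ2 - 1)) (y ^ (δ2 - 1)) with h' | h'
        · exact h'
        · exact absurd (hstrict.mp h') (not_le.mpr hlt)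
      nlinarith [mul_pos hC2pos (neg_pos.mpr hδ2neg)]
    · intro h
      have hle : y ^ (δ2 - 1) ≤ k1 ^ (δ2 - 1) :=
        (Real.rpow_le_rpow_iff_of_neg hy hk1pos (by linarith)).mpr h
      nlinarith [mul_pos hC2pos (neg_pos.mpr hδ2neg)]
  have hcont : ContinuousOn g (Set.Ici k1) := by
    rw [hg]
    apply ContinuousOn.sub
    apply ContinuousOn.add
    · exact continuousOn_const.mul (continuousOn_id.rpow_const (fun x hx =>
        Or.inl (by simpa using (lt_of_lt_of_le hk1pos hx).ne')))
    · exact continuousOn_const.mul continuousOn_id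
    · exact continuousOn_const
  have hmono : MonotoneOn g (Set.Ici k1) := by
    apply monotoneOn_of_deriv_nonneg (convex_Ici k1) hcont
    · intro y hy
      rw [interior_Ici] at hy
      have hypos : 0 < y := lt_trans hk1pos hy
      have h1 : HasDerivAt (fun x : ℝ => x ^ δ2) (δ2 * y ^ (δ2 - 1)) y :=
        Real.hasDerivAt_rpow_const (Or.inl hypos.ne')
      have h2 : HasDerivAt g (C2 * (δ2 * y ^ (δ2 - 1)) + βb) y := by
        rw [hg]
        simpa using (((h1.const_mul C2).add ((hasDerivAt_id y).const_mul βb)).sub_const βs)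
      exact h2.differentiableAt.differentiableWithinAt
    · intro y hy
      rw [interior_Ici] at hy
      have hypos : 0 < y := lt_trans hk1pos hy
      exact (hiff y hypos).mpr hy.le
  refine ⟨hgk1, hiff, hmono, fun y hy => ?_⟩
  calc (0 : ℝ) = g k1 := hgk1.symm
    _ ≤ g y := hmono (Set.self_mem_Ici) hy hy
end

section
/- Let k2 be the larger of the two zeros in (0,∞) of f(y) = C2·(δ1 − δ2)·y^{δ2} + βs·(δ1 − 1)·y − βb·δ1, so that k2 > y_c = [βs·(δ1 − 1)/(C2·(−δ2)·(δ1 − δ2))]^{1/(δ2 − 1)}. Then βs·(δ1 − 1)·k2^{−1} − C2·(−δ2)·(δ1 − δ2)·k2^{δ2−2} > 0. (With C1 = (C2·δ2·k2^{δ2−1} + βs)/(δ1·k2^{δ1−1}) and φ(y) = C1·y^{δ1} − C2·y^{δ2} + βb − βs·y, this quantity equals φ''(k2), so φ''(k2) > 0.) -/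
/-- with k2 the larger zero of f on (0,∞) (so k2 > y_c),
βs·(δ1−1)·k2⁻¹ − C2·(−δ2)·(δ1−δ2)·k2^{δ2−2} > 0 (this quantity equals φ''(k2)). -/
theorem stmt_13 (lam ρ μ1 μ2 δ1 δ2 βs βb C2 k2 yc : ℝ)
    (hlam : 0 < lam) (hμ1 : μ1 < ρ) (hμ2 : μ2 < ρ)
    (hβs : 0 < βs) (hβ : βs < βb)
    (hδ1 : δ1 = (1 + (μ1 - μ2) / lam
      + Real.sqrt ((1 + (μ1 - μ2) / lam) ^ 2 + 4 * (ρ - μ1) / lam)) / 2)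
    (hδ2 : δ2 = (1 + (μ1 - μ2) / lam
      - Real.sqrt ((1 + (μ1 - μ2) / lam) ^ 2 + 4 * (ρ - μ1) / lam)) / 2)
    (hC2 : C2 = (βs / (1 - δ2)) ^ (1 - δ2) * (βb / (-δ2)) ^ δ2)
    (hyc : yc = (βs * (δ1 - 1) / (C2 * (-δ2) * (δ1 - δ2))) ^ (1 / (δ2 - 1)))
    (f : ℝ → ℝ)
    (hf : f = fun y : ℝ => C2 * (δ1 - δ2) * y ^ δ2 + βs * (δ1 - 1) * y - βb * δ1)
    (hk2pos : 0 < k2) (hk2zero : f k2 = 0)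
    (hk2max : ∀ y : ℝ, 0 < y → f y = 0 → y ≤ k2)
    (hk2yc : yc < k2) :
    0 < βs * (δ1 - 1) * k2⁻¹ - C2 * (-δ2) * (δ1 - δ2) * k2 ^ (δ2 - 2) := by
  set m := (μ1 - μ2) / lam with hm
  set r := 4 * (ρ - μ1) / lam with hr
  have hrpos : 0 < r := by
    have : 0 < ρ - μ1 := by linarith
    positivity
  have hs : Real.sqrt ((1 + m) ^ 2 + r) ^ 2 = (1 + m) ^ 2 + r := by
    rw [Real.sq_sqrt]; positivity
  set s := Real.sqrt ((1 + m) ^ 2 + r) with hsdef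
  have hsnn : 0 ≤ s := Real.sqrt_nonneg _
  have hδ2neg : δ2 < 0 := by
    rw [hδ2]
    have h1 : (1 + m) ^ 2 < s ^ 2 := by rw [hs]; linarith
    have : 1 + m < s := by nlinarith
    linarith
  have hδ1gt : 1 < δ1 := by
    rw [hδ1]
    have hmr : 0 < m + r / 4 := by
      rw [hm, hr]
      have : (μ1 - μ2) / lam + 4 * (ρ - μ1) / lam / 4 = (ρ - μ2) / lam := by ring
      rw [this]
      have : 0 < ρ - μ2 := by linarith
      positivity
    have h1 : (1 - m) ^ 2 < s ^ 2 := by rw [hs]; nlinarith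
    have : 1 - m < s := by nlinarith
    linarith
  have hC2pos : 0 < C2 := by
    rw [hC2]
    have h1 : 0 < βs / (1 - δ2) := by
      apply div_pos hβs; linarith
    have h2 : 0 < βb / (-δ2) := by
      apply div_pos (by linarith); linarith
    positivity
  set A := βs * (δ1 - 1) / (C2 * (-δ2) * (δ1 - δ2)) with hA
  have hApos : 0 < A := by
    apply div_pos
    · nlinarith
    · have h1 : 0 < δ1 - δ2 := by linarith
      have h2 : 0 < -δ2 := by linarith
      exact mul_pos (mul_pos hC2pos h2) h1
  have hexp : δ2 - 1 ≠ 0 := by linarith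
  have hycpos : 0 < yc := by rw [hyc]; exact Real.rpow_pos_of_pos hApos _
  have hycA : yc ^ (δ2 - 1) = A := by
    rw [hyc, ← Real.rpow_mul hApos.le, one_div, inv_mul_cancel₀ hexp, Real.rpow_one]
  have hk2lt : k2 ^ (δ2 - 1) < A := by
    rw [← hycA]
    exact Real.rpow_lt_rpow_of_neg hycpos hk2yc (by linarith)
  have hD : 0 < C2 * (-δ2) * (δ1 - δ2) := by
    have h1 : 0 < δ1 - δ2 := by linarith
    have h2 : 0 < -δ2 := by linarith
    exact mul_pos (mul_pos hC2pos h2) h1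
  have key : C2 * (-δ2) * (δ1 - δ2) * k2 ^ (δ2 - 1) < βs * (δ1 - 1) := by
    have h := (mul_lt_mul_iff_right₀ hD).2 hk2lt
    have hAe : C2 * (-δ2) * (δ1 - δ2) * A = βs * (δ1 - 1) := by
      rw [hA, mul_div_cancel₀ _ hD.ne']
    linarith
  have hsplit : k2 ^ (δ2 - 2) = k2 ^ (δ2 - 1) * k2⁻¹ := by
    rw [← Real.rpow_neg_one k2, ← Real.rpow_add hk2pos]
    congr 1; ring
  have hinv : 0 < k2⁻¹ := inv_pos.2 hk2pos
  have h2 : 0 < βs * (δ1 - 1) - C2 * (-δ2) * (δ1 - δ2) * k2 ^ (δ2 - 1) := by linarith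
  have hprod := mul_pos h2 hinv
  have heq : βs * (δ1 - 1) * k2⁻¹ - C2 * (-δ2) * (δ1 - δ2) * (k2 ^ (δ2 - 1) * k2⁻¹)
      = (βs * (δ1 - 1) - C2 * (-δ2) * (δ1 - δ2) * k2 ^ (δ2 - 1)) * k2⁻¹ := by ring
  rw [hsplit, heq]
  exact hprod
end

section
/- Let k1 = (βs/βb)·(−δ2)/(1 − δ2), let k2 be the larger of the two zeros in (0,∞) of f(y) = C2·(δ1 − δ2)·y^{δ2} + βs·(δ1 − 1)·y − βb·δ1, and set C1 = (C2·δ2·k2^{δ2−1} + βs)/(δ1·k2^{δ1−1}). Then for every y in the interval [k1, k2], one has C1·y^{δ1} − C2·y^{δ2} + βb − βs·y ≥ 0. -/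
set_option maxHeartbeats 1600000


/-- with k1 = (βs/βb)·(−δ2)/(1−δ2), k2 the larger zero of f on (0,∞),
and C1 = (C2·δ2·k2^{δ2−1} + βs)/(δ1·k2^{δ1−1}), for every y ∈ [k1, k2] one has
C1·y^{δ1} − C2·y^{δ2} + βb − βs·y ≥ 0. -/
theorem stmt_14 (lam ρ μ1 μ2 δ1 δ2 βs βb C2 k1 k2 C1 : ℝ)
    (hlam : 0 < lam) (hμ1 : μ1 < ρ) (hμ2 : μ2 < ρ)
    (hβs : 0 < βs) (hβ : βs < βb)
    (hδ1 : δ1 = (1 + (μ1 - μ2) / lam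
      + Real.sqrt ((1 + (μ1 - μ2) / lam) ^ 2 + 4 * (ρ - μ1) / lam)) / 2)
    (hδ2 : δ2 = (1 + (μ1 - μ2) / lam
      - Real.sqrt ((1 + (μ1 - μ2) / lam) ^ 2 + 4 * (ρ - μ1) / lam)) / 2)
    (hC2 : C2 = (βs / (1 - δ2)) ^ (1 - δ2) * (βb / (-δ2)) ^ δ2)
    (hk1 : k1 = (βs / βb) * (-δ2) / (1 - δ2))
    (f : ℝ → ℝ)
    (hf : f = fun y : ℝ => C2 * (δ1 - δ2) * y ^ δ2 + βs * (δ1 - 1) * y - βb * δ1)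
    (hk2pos : 0 < k2) (hk2zero : f k2 = 0)
    (hk2max : ∀ y : ℝ, 0 < y → f y = 0 → y ≤ k2)
    (hC1 : C1 = (C2 * δ2 * k2 ^ (δ2 - 1) + βs) / (δ1 * k2 ^ (δ1 - 1))) :
    ∀ y ∈ Set.Icc k1 k2, 0 ≤ C1 * y ^ δ1 - C2 * y ^ δ2 + βb - βs * y := by
  -- ### Step 1: sign facts about δ1 and δ2
  have hdelta : δ2 < 0 ∧ 1 < δ1 := by
    set S : ℝ := 1 + (μ1 - μ2) / lam with hS
    have hc : 0 < 4 * (ρ - μ1) / lam := div_pos (by linarith) hlam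
    have hRS : S < Real.sqrt (S ^ 2 + 4 * (ρ - μ1) / lam) := by
      calc S ≤ |S| := le_abs_self S
      _ = Real.sqrt (S ^ 2) := (Real.sqrt_sq_eq_abs S).symm
      _ < _ := Real.sqrt_lt_sqrt (sq_nonneg S) (by linarith)
    constructor
    · rw [hδ2]; linarith
    · rw [hδ1]
      have h2S : 2 - S < Real.sqrt (S ^ 2 + 4 * (ρ - μ1) / lam) := by
        rcases le_or_gt (2 - S) 0 with h | h
        · calc 2 - S ≤ 0 := h
          _ < _ := Real.sqrt_pos.mpr (by nlinarith [sq_nonneg S])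
        · rw [show (2 : ℝ) - S = Real.sqrt ((2 - S)^2) by
              rw [Real.sqrt_sq h.le]]
          apply Real.sqrt_lt_sqrt (sq_nonneg _)
          have key : S ^ 2 + 4 * (ρ - μ1) / lam - (2 - S) ^ 2 = 4 * (ρ - μ2) / lam := by
            rw [hS]; field_simp; ring
          have : 0 < 4 * (ρ - μ2) / lam := div_pos (by linarith) hlam
          linarith
      linarith
  obtain ⟨hd2, hd1⟩ := hdelta
  have hβb : 0 < βb := hβs.trans hβ
  have h1d2 : 0 < 1 - δ2 := by linarith
  have hnd2 : 0 < -δ2 := by linarith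
  -- ### Step 2: value of C2 * k1 ^ δ2 and positivity
  have hstep2 : C2 * k1 ^ δ2 = βs / (1 - δ2) ∧ 0 < k1 ∧ 0 < C2 ∧
      C2 * ((βb / βs) * (-δ2) / (1 - δ2)) ^ δ2 = (βs / (1 - δ2)) * ((βb/βs)^(2:ℝ)) ^ δ2 := by
    set A : ℝ := βs / (1 - δ2) with hA
    set B : ℝ := βb / (-δ2) with hB
    have hApos : 0 < A := div_pos hβs h1d2
    have hBpos : 0 < B := div_pos hβb hnd2
    have hk1AB : k1 = A / B := by
      rw [hk1, hA, hB, div_div_div_comm]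
      rw [div_div_eq_mul_div, div_mul_eq_mul_div, mul_comm βs (-δ2), mul_div_assoc, mul_div_assoc]
    have hk1pos : 0 < k1 := by rw [hk1AB]; positivity
    have hC2pos : 0 < C2 := by
      rw [hC2]
      exact mul_pos (Real.rpow_pos_of_pos hApos _) (Real.rpow_pos_of_pos hBpos _)
    have hCk1 : C2 * k1 ^ δ2 = A := by
      rw [hC2, hk1AB, Real.div_rpow hApos.le hBpos.le, div_eq_mul_inv, ← Real.rpow_neg hBpos.le]
      rw [show A^(1-δ2)*B^δ2*(A^δ2*B^(-δ2)) = (A^(1-δ2)*A^δ2)*(B^δ2*B^(-δ2)) by ring]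
      rw [← Real.rpow_add hApos, ← Real.rpow_add hBpos,
        show (1-δ2)+δ2 = 1 by ring, show δ2 + -δ2 = 0 by ring, Real.rpow_one, Real.rpow_zero, mul_one]
    refine ⟨hCk1, hk1pos, hC2pos, ?_⟩
    have ht : (0:ℝ) < βb / βs := div_pos hβb hβs
    have hkt : (βb / βs) * (-δ2) / (1 - δ2) = ((βb/βs)^(2:ℝ)) * k1 := by
      rw [hk1, Real.rpow_two]
      field_simp
    rw [hkt, Real.mul_rpow (by positivity) hk1pos.le, mul_comm (((βb/βs)^(2:ℝ))^δ2) _, ← mul_assoc, hCk1]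
  obtain ⟨hCk1, hk1pos, hC2pos, hCkt⟩ := hstep2
  -- ### Step 3: k2 is larger than the tangency point of the obstacle
  have hktk2 : βb * (-δ2) / (βs * (1 - δ2)) < k2 := by
    set kt : ℝ := (βb / βs) * (-δ2) / (1 - δ2) with hktdef
    have hktpos : 0 < kt := by positivity
    have hkteq : βb * (-δ2) / (βs * (1 - δ2)) = kt := by rw [hktdef]; field_simp
    rw [hkteq]
    have ht1 : (1:ℝ) < βb / βs := (one_lt_div hβs).mpr hβ
    have hw1 : ((βb/βs)^(2:ℝ)) ^ δ2 < 1 := by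
      apply Real.rpow_lt_one_of_one_lt_of_neg _ hd2
      rw [Real.rpow_two]; nlinarith
    have hfkt : f kt < 0 := by
      rw [hf]
      simp only
      rw [show C2 * (δ1 - δ2) * kt ^ δ2 = (δ1 - δ2) * (C2 * kt ^ δ2) by ring, hCkt]
      set w : ℝ := ((βb/βs)^(2:ℝ)) ^ δ2 with hwdef
      have hkt' : kt * (1 - δ2) * βs = βb * (-δ2) := by rw [hktdef]; field_simp
      have key : ((δ1 - δ2) * (βs / (1 - δ2) * w) + βs * (δ1 - 1) * kt - βb * δ1) * (1 - δ2)
          = (δ1 - δ2) * βs * w - (δ1 - δ2) * βb := by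
        field_simp
        nlinarith [hkt']
      nlinarith [key, mul_pos (mul_pos (show (0:ℝ) < δ1 - δ2 by linarith) hβs)
        (show (0:ℝ) < 1 - w by linarith)]
    set M : ℝ := max kt (βb * δ1 / (βs * (δ1 - 1))) + 1 with hM
    clear_value M
    have hMkt : kt < M := by
      have := le_max_left kt (βb * δ1 / (βs * (δ1 - 1))); linarith
    have hMpos : 0 < M := hktpos.trans hMkt
    have hfM : 0 < f M := by
      have h2 : βb * δ1 / (βs * (δ1 - 1)) < M := by
        have := le_max_right kt (βb * δ1 / (βs * (δ1 - 1))); linarith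
      have h3 : βb * δ1 < βs * (δ1 - 1) * M := by
        have hpos : 0 < βs * (δ1 - 1) := by nlinarith
        calc βb * δ1 = (βb * δ1 / (βs * (δ1 - 1))) * (βs * (δ1 - 1)) := by field_simp [show δ1 - 1 ≠ 0 by linarith]
        _ < M * (βs * (δ1 - 1)) := by exact mul_lt_mul_of_pos_right h2 hpos
        _ = βs * (δ1 - 1) * M := by ring
      rw [hf]; simp only
      have : 0 < C2 * (δ1 - δ2) * M ^ δ2 :=
        mul_pos (mul_pos hC2pos (by linarith)) (Real.rpow_pos_of_pos hMpos _)
      linarith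
    have hfc : ContinuousOn f (Set.Icc kt M) := by
      intro x hx
      have hx0 : x ≠ 0 := by nlinarith [hx.1]
      rw [hf]
      apply ContinuousWithinAt.sub
      apply ContinuousWithinAt.add
      · exact (ContinuousAt.continuousWithinAt
          ((Real.continuousAt_rpow_const x δ2 (Or.inl hx0)).const_mul _))
      · exact ((continuous_const.mul continuous_id).continuousAt).continuousWithinAt
      · exact continuousWithinAt_const
    have h0mem : (0:ℝ) ∈ Set.Icc (f kt) (f M) := ⟨hfkt.le, hfM.le⟩
    obtain ⟨z, hz, hz0⟩ := intermediate_value_Icc hMkt.le hfc h0mem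
    have hzk2 : z ≤ k2 := hk2max z (hktpos.trans_le hz.1) hz0
    have : kt ≠ z := fun h => by rw [← h] at hz0; linarith
    exact lt_of_lt_of_le (lt_of_le_of_ne hz.1 this) hzk2
  -- ### Step 4: facts about C1 and the values of g at k1, k2
  have hE : C2 * (δ1 - δ2) * k2 ^ δ2 + βs * (δ1 - 1) * k2 - βb * δ1 = 0 := by
    rw [hf] at hk2zero; exact hk2zero
  have hp1 : k2 ^ (δ2 - 1) * k2 = k2 ^ δ2 := by
    rw [← Real.rpow_add_one hk2pos.ne' (δ2 - 1)]; ring_nf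
  have hp2 : k2 ^ (δ1 - 1) * k2 = k2 ^ δ1 := by
    rw [← Real.rpow_add_one hk2pos.ne' (δ1 - 1)]; ring_nf
  have hd1k2 : δ1 * k2 ^ (δ1 - 1) ≠ 0 := by positivity
  have hC1' : C1 * (δ1 * k2 ^ (δ1 - 1)) = C2 * δ2 * k2 ^ (δ2 - 1) + βs :=
    (eq_div_iff hd1k2).mp hC1
  have hG : C1 * δ1 * k2 ^ δ1 = C2 * δ2 * k2 ^ δ2 + βs * k2 := by
    linear_combination k2 * hC1' + (-(C1*δ1)) * hp2 + (C2*δ2) * hp1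
  have hd1ne : δ1 ≠ 0 := by linarith
  have hQpos : 0 < βs * (1 - δ2) * k2 + δ2 * βb := by
    have h := (div_lt_iff₀ (by positivity : (0:ℝ) < βs * (1 - δ2))).mp hktk2
    nlinarith
  have hC1Q : C1 * (δ1 - δ2) * k2 ^ δ1 = βs * (1 - δ2) * k2 + δ2 * βb := by
    have h5 : δ1 * (C1 * (δ1 - δ2) * k2 ^ δ1 - (βs * (1 - δ2) * k2 + δ2 * βb)) = 0 := by
      linear_combination (δ1 - δ2) * hG + δ2 * hE
    rcases mul_eq_zero.mp h5 with h | h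
    · exact absurd h hd1ne
    · linarith
  have hC1pos : 0 < C1 := by
    have hx : 0 < (δ1 - δ2) * k2 ^ δ1 :=
      mul_pos (by linarith) (Real.rpow_pos_of_pos hk2pos _)
    nlinarith [hx]
  have hgk2 : C1 * k2 ^ δ1 - C2 * k2 ^ δ2 + βb - βs * k2 = 0 := by
    have h5 : δ1 * (C1 * k2 ^ δ1 - C2 * k2 ^ δ2 + βb - βs * k2) = 0 := by
      linear_combination hG - hE
    rcases mul_eq_zero.mp h5 with h | h
    · exact absurd h hd1ne
    · exact h
  have hk1e : k1 * (βb * (1 - δ2)) = βs * (-δ2) := by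
    rw [hk1]; field_simp
  have h6 : βs / (1 - δ2) < βb - βs * k1 := by
    rw [div_lt_iff₀ h1d2]
    nlinarith [hk1e, mul_pos (sub_pos.mpr hβ) hβb,
      mul_pos (mul_pos (sub_pos.mpr hβ) (show (0:ℝ) < βb + βs by linarith)) hnd2]
  have hgk1 : 0 < C1 * k1 ^ δ1 - C2 * k1 ^ δ2 + βb - βs * k1 := by
    have := mul_pos hC1pos (Real.rpow_pos_of_pos hk1pos δ1)
    rw [hCk1]
    linarith
  -- ### Step 5: monotonicity analysis
  set g : ℝ → ℝ := fun y => C1 * y ^ δ1 - C2 * y ^ δ2 + βb - βs * y with hgdef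
  set u : ℝ → ℝ := fun y => C1 * δ1 * y ^ (δ1 - δ2) - βs * y ^ (1 - δ2) - C2 * δ2 with hudef
  set v : ℝ → ℝ := fun y => C1 * δ1 * (δ1 - δ2) * y ^ (δ1 - 1) - βs * (1 - δ2) with hvdef
  have huk2 : u k2 = 0 := by
    rw [hudef]
    simp only
    rw [Real.rpow_sub hk2pos, Real.rpow_sub hk2pos, Real.rpow_one]
    have hne : k2 ^ δ2 ≠ 0 := ne_of_gt (Real.rpow_pos_of_pos hk2pos _)
    field_simp
    linear_combination hG
  have hgd : ∀ x : ℝ, 0 < x → HasDerivAt g (x ^ (δ2 - 1) * u x) x := by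
    intro x hx
    have h1 : HasDerivAt (fun y : ℝ => y ^ δ1) (δ1 * x ^ (δ1 - 1)) x :=
      Real.hasDerivAt_rpow_const (Or.inl hx.ne')
    have h2 : HasDerivAt (fun y : ℝ => y ^ δ2) (δ2 * x ^ (δ2 - 1)) x :=
      Real.hasDerivAt_rpow_const (Or.inl hx.ne')
    have h3 : HasDerivAt (fun y : ℝ => βs * y) βs x := by
      simpa using (hasDerivAt_id x).const_mul βs
    have h := (((h1.const_mul C1).sub (h2.const_mul C2)).add_const βb).sub h3
    have e1 : x ^ (δ2 - 1) * x ^ (δ1 - δ2) = x ^ (δ1 - 1) := by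
      rw [← Real.rpow_add hx]; ring_nf
    have e2 : x ^ (δ2 - 1) * x ^ (1 - δ2) = 1 := by
      rw [← Real.rpow_add hx]; norm_num
    have heq : x ^ (δ2 - 1) * u x = C1 * (δ1 * x ^ (δ1 - 1)) - C2 * (δ2 * x ^ (δ2 - 1)) - βs := by
      rw [hudef]
      simp only
      linear_combination (C1 * δ1) * e1 - βs * e2
    rw [heq]
    exact h
  have hud : ∀ x : ℝ, 0 < x → HasDerivAt u (x ^ (-δ2) * v x) x := by
    intro x hx
    have h1 : HasDerivAt (fun y : ℝ => y ^ (δ1 - δ2)) ((δ1 - δ2) * x ^ (δ1 - δ2 - 1)) x :=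
      Real.hasDerivAt_rpow_const (Or.inl hx.ne')
    have h2 : HasDerivAt (fun y : ℝ => y ^ (1 - δ2)) ((1 - δ2) * x ^ (1 - δ2 - 1)) x :=
      Real.hasDerivAt_rpow_const (Or.inl hx.ne')
    have h := ((h1.const_mul (C1 * δ1)).sub (h2.const_mul βs)).sub_const (C2 * δ2)
    have e1 : x ^ (-δ2) * x ^ (δ1 - 1) = x ^ (δ1 - δ2 - 1) := by
      rw [← Real.rpow_add hx]; ring_nf
    have e2 : x ^ (1 - δ2 - 1) = x ^ (-δ2) := by ring_nf
    have heq : x ^ (-δ2) * v x = C1 * δ1 * ((δ1 - δ2) * x ^ (δ1 - δ2 - 1))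
        - βs * ((1 - δ2) * x ^ (1 - δ2 - 1)) := by
      rw [hvdef]
      simp only
      rw [e2]
      linear_combination (C1 * δ1 * (δ1 - δ2)) * e1
    rw [heq]
    exact h
  have hvmono : ∀ a b : ℝ, 0 < a → a < b → v a < v b := by
    intro a b ha hab
    have h1 : a ^ (δ1 - 1) < b ^ (δ1 - 1) :=
      Real.rpow_lt_rpow ha.le hab (by linarith)
    have hPc : 0 < C1 * δ1 * (δ1 - δ2) := by
      apply mul_pos (mul_pos hC1pos (by linarith)); linarith
    rw [hvdef]
    simp only
    nlinarith [mul_lt_mul_of_pos_left h1 hPc]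
  have hucont : ∀ a b : ℝ, 0 < a → ContinuousOn u (Set.Icc a b) := by
    intro a b ha x hx
    exact ((hud x (lt_of_lt_of_le ha hx.1)).continuousAt).continuousWithinAt
  have hgcont : ∀ a b : ℝ, 0 < a → ContinuousOn g (Set.Icc a b) := by
    intro a b ha x hx
    exact ((hgd x (lt_of_lt_of_le ha hx.1)).continuousAt).continuousWithinAt
  have hsubcl : ∀ s : ℝ, 0 < s → s < k2 → 0 < u s → v s < 0 := by
    intro s hs hsk2 hus
    by_contra hvs
    push_neg at hvs
    have hmono : StrictMonoOn u (Set.Icc s k2) := by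
      apply strictMonoOn_of_deriv_pos (convex_Icc s k2) (hucont s k2 hs)
      intro x hx
      rw [interior_Icc] at hx
      have hx0 : 0 < x := hs.trans hx.1
      rw [(hud x hx0).deriv]
      have : v s < v x := hvmono s x hs hx.1
      exact mul_pos (Real.rpow_pos_of_pos hx0 _) (by linarith)
    have := hmono (Set.left_mem_Icc.mpr hsk2.le) (Set.right_mem_Icc.mpr hsk2.le) hsk2
    rw [huk2] at this
    linarith
  have hprop : ∀ s : ℝ, 0 < s → s < k2 → 0 < u s → ∀ x : ℝ, 0 < x → x ≤ s → 0 < u x := by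
    intro s hs hsk2 hus x hx hxs
    rcases eq_or_lt_of_le hxs with rfl | hxs'
    · exact hus
    have hvs := hsubcl s hs hsk2 hus
    have hanti : AntitoneOn u (Set.Icc x s) := by
      apply antitoneOn_of_deriv_nonpos (convex_Icc x s) (hucont x s hx)
      · intro w hw
        rw [interior_Icc] at hw
        exact ((hud w (hx.trans hw.1)).differentiableAt).differentiableWithinAt
      · intro w hw
        rw [interior_Icc] at hw
        have hw0 : 0 < w := hx.trans hw.1
        rw [(hud w hw0).deriv]
        have : v w < v s := hvmono w s hw0 hw.2
        exact le_of_lt (mul_neg_of_pos_of_neg (Real.rpow_pos_of_pos hw0 _) (by linarith))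
    have := hanti (Set.left_mem_Icc.mpr hxs) (Set.right_mem_Icc.mpr hxs) hxs
    linarith
  intro y hy
  obtain ⟨hy1, hy2⟩ := hy
  have hy0 : 0 < y := lt_of_lt_of_le hk1pos hy1
  show 0 ≤ g y
  rcases le_or_gt (u y) 0 with hc | hc
  · have hanti : AntitoneOn g (Set.Icc y k2) := by
      apply antitoneOn_of_deriv_nonpos (convex_Icc y k2) (hgcont y k2 hy0)
      · intro w hw
        rw [interior_Icc] at hw
        exact ((hgd w (hy0.trans hw.1)).differentiableAt).differentiableWithinAt
      · intro w hw
        rw [interior_Icc] at hw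
        have hw0 : 0 < w := hy0.trans hw.1
        rw [(hgd w hw0).deriv]
        have huw : u w ≤ 0 := by
          by_contra hpos
          push_neg at hpos
          have := hprop w hw0 hw.2 hpos y hy0 hw.1.le
          linarith
        exact mul_nonpos_of_nonneg_of_nonpos (Real.rpow_pos_of_pos hw0 _).le huw
    have h := hanti (Set.left_mem_Icc.mpr hy2) (Set.right_mem_Icc.mpr hy2) hy2
    have hgk2' : g k2 = 0 := hgk2
    linarith
  · have hylt : y < k2 := by
      rcases lt_or_eq_of_le hy2 with h | rfl
      · exact h
      · rw [huk2] at hc; linarith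
    have hmono : MonotoneOn g (Set.Icc k1 y) := by
      apply monotoneOn_of_deriv_nonneg (convex_Icc k1 y) (hgcont k1 y hk1pos)
      · intro w hw
        rw [interior_Icc] at hw
        exact ((hgd w (hk1pos.trans hw.1)).differentiableAt).differentiableWithinAt
      · intro w hw
        rw [interior_Icc] at hw
        have hw0 : 0 < w := hk1pos.trans hw.1
        rw [(hgd w hw0).deriv]
        have huw : 0 < u w := hprop y hy0 hylt hc w hw0 hw.2.le
        exact le_of_lt (mul_pos (Real.rpow_pos_of_pos hw0 _) huw)
    have h := hmono (Set.left_mem_Icc.mpr hy1) (Set.right_mem_Icc.mpr hy1) hy1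
    have hgk1' : 0 < g k1 := hgk1
    linarith
end

section
/- Let k2 be the larger of the two zeros in (0,∞) of f(y) = C2·(δ1 − δ2)·y^{δ2} + βs·(δ1 − 1)·y − βb·δ1 and set C1 = (C2·δ2·k2^{δ2−1} + βs)/(δ1·k2^{δ1−1}), so that C1 > 0. Define w0(y) = C2·y^{δ2} − βb + βs·y for y ≥ k2. Then w0(k2) = C1·k2^{δ1} > 0, w0'(k2) = C1·δ1·k2^{δ1−1} > 0, w0''(y) > 0 for all y > 0, and consequently w0 is strictly increasing and strictly positive on [k2, ∞); in particular C2·y^{δ2} − βb + βs·y > 0 for every y ≥ k2. -/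
set_option maxHeartbeats 1000000 in
/-- with k2 the larger zero of f, C1 = (C2·δ2·k2^{δ2−1} + βs)/(δ1·k2^{δ1−1})
(so C1 > 0), and w0(y) = C2·y^{δ2} − βb + βs·y: w0(k2) = C1·k2^{δ1} > 0,
w0'(k2) = C1·δ1·k2^{δ1−1} > 0, w0''(y) > 0 for all y > 0, w0 is strictly increasing on
[k2,∞), and C2·y^{δ2} − βb + βs·y > 0 for every y ≥ k2. -/
theorem stmt_15 (lam ρ μ1 μ2 δ1 δ2 βs βb C2 k2 C1 : ℝ)
    (hlam : 0 < lam) (hμ1 : μ1 < ρ) (hμ2 : μ2 < ρ)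
    (hβs : 0 < βs) (hβ : βs < βb)
    (hδ1 : δ1 = (1 + (μ1 - μ2) / lam
      + Real.sqrt ((1 + (μ1 - μ2) / lam) ^ 2 + 4 * (ρ - μ1) / lam)) / 2)
    (hδ2 : δ2 = (1 + (μ1 - μ2) / lam
      - Real.sqrt ((1 + (μ1 - μ2) / lam) ^ 2 + 4 * (ρ - μ1) / lam)) / 2)
    (hC2 : C2 = (βs / (1 - δ2)) ^ (1 - δ2) * (βb / (-δ2)) ^ δ2)
    (f : ℝ → ℝ)
    (hf : f = fun y : ℝ => C2 * (δ1 - δ2) * y ^ δ2 + βs * (δ1 - 1) * y - βb * δ1)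
    (hk2pos : 0 < k2) (hk2zero : f k2 = 0)
    (hk2max : ∀ y : ℝ, 0 < y → f y = 0 → y ≤ k2)
    (hC1 : C1 = (C2 * δ2 * k2 ^ (δ2 - 1) + βs) / (δ1 * k2 ^ (δ1 - 1)))
    (hC1pos : 0 < C1)
    (hfit1 : C1 * k2 ^ δ1 = C2 * k2 ^ δ2 - βb + βs * k2)
    (hfit2 : C1 * δ1 * k2 ^ (δ1 - 1) = C2 * δ2 * k2 ^ (δ2 - 1) + βs)
    (w0 : ℝ → ℝ)
    (hw0 : w0 = fun y : ℝ => C2 * y ^ δ2 - βb + βs * y) :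
    w0 k2 = C1 * k2 ^ δ1 ∧ 0 < C1 * k2 ^ δ1 ∧
    deriv w0 k2 = C1 * δ1 * k2 ^ (δ1 - 1) ∧ 0 < C1 * δ1 * k2 ^ (δ1 - 1) ∧
    (∀ y : ℝ, 0 < y → 0 < deriv (deriv w0) y) ∧
    StrictMonoOn w0 (Set.Ici k2) ∧
    (∀ y : ℝ, k2 ≤ y → 0 < C2 * y ^ δ2 - βb + βs * y) := by
  -- basic facts about δ1, δ2
  set a : ℝ := 1 + (μ1 - μ2) / lam with ha
  set s : ℝ := Real.sqrt (a ^ 2 + 4 * (ρ - μ1) / lam) with hs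
  have hbpos : 0 < 4 * (ρ - μ1) / lam := div_pos (by linarith) hlam
  have hbeq : 4 * (ρ - μ1) / lam = 4 * ((ρ - μ1) / lam) := by ring
  have hb'pos : 0 < (ρ - μ1) / lam := by linarith
  have harg : (0:ℝ) ≤ a ^ 2 + 4 * (ρ - μ1) / lam := by nlinarith [sq_nonneg a]
  have hs2 : s ^ 2 = a ^ 2 + 4 * (ρ - μ1) / lam := Real.sq_sqrt harg
  have hsnn : 0 ≤ s := Real.sqrt_nonneg _
  clear_value a s
  have hspos : 0 < s := by nlinarith
  have hδ2neg : δ2 < 0 := by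
    rw [hδ2]
    have : a < s := by nlinarith [mul_self_nonneg (a - s)]
    linarith
  have hab1 : 1 < a + (ρ - μ1) / lam := by
    have hsum : (μ1 - μ2) / lam + (ρ - μ1) / lam = (ρ - μ2) / lam := by
      rw [← add_div]; ring_nf
    have hpos : 0 < (ρ - μ2) / lam := div_pos (by linarith) hlam
    rw [ha]; linarith
  have hδ1gt1 : 1 < δ1 := by
    rw [hδ1]
    rcases le_or_gt a 2 with hle | hgt
    · have : 2 - a < s := by nlinarith [mul_nonneg hsnn (by linarith : (0:ℝ) ≤ 2 - a)]
      linarith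
    · linarith
  have hδ1pos : 0 < δ1 := by linarith
  have hC2pos : 0 < C2 := by
    rw [hC2]
    have h1 : 0 < βs / (1 - δ2) := div_pos hβs (by linarith)
    have h2 : 0 < βb / (-δ2) := div_pos (by linarith) (by linarith)
    exact mul_pos (Real.rpow_pos_of_pos h1 _) (Real.rpow_pos_of_pos h2 _)
  -- derivatives
  have hd : ∀ y : ℝ, 0 < y → HasDerivAt w0 (C2 * δ2 * y ^ (δ2 - 1) + βs) y := by
    intro y hy
    rw [hw0]
    have h1 : HasDerivAt (fun z : ℝ => z ^ δ2) (δ2 * y ^ (δ2 - 1)) y :=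
      Real.hasDerivAt_rpow_const (Or.inl (ne_of_gt hy))
    have h2 := ((h1.const_mul C2).sub_const βb).add ((hasDerivAt_id y).const_mul βs)
    exact h2.congr_deriv (by ring)
  have hderiv : ∀ y : ℝ, 0 < y → deriv w0 y = C2 * δ2 * y ^ (δ2 - 1) + βs :=
    fun y hy => (hd y hy).deriv
  have hk2d : deriv w0 k2 = C1 * δ1 * k2 ^ (δ1 - 1) := by
    rw [hderiv k2 hk2pos, hfit2]
  have hk2dpos : 0 < C1 * δ1 * k2 ^ (δ1 - 1) := by
    have := Real.rpow_pos_of_pos hk2pos (δ1 - 1)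
    positivity
  -- second derivative
  have hdd : ∀ y : ℝ, 0 < y → 0 < deriv (deriv w0) y := by
    intro y hy
    have hev : deriv w0 =ᶠ[nhds y] fun z : ℝ => C2 * δ2 * z ^ (δ2 - 1) + βs :=
      Filter.eventuallyEq_of_mem (Ioi_mem_nhds hy) (fun z hz => hderiv z hz)
    rw [hev.deriv_eq]
    have h1 : HasDerivAt (fun z : ℝ => z ^ (δ2 - 1)) ((δ2 - 1) * y ^ (δ2 - 1 - 1)) y :=
      Real.hasDerivAt_rpow_const (Or.inl (ne_of_gt hy))
    have h2 : HasDerivAt (fun z : ℝ => C2 * δ2 * z ^ (δ2 - 1) + βs)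
        (C2 * δ2 * ((δ2 - 1) * y ^ (δ2 - 1 - 1))) y :=
      (h1.const_mul (C2 * δ2)).add_const βs
    rw [h2.deriv]
    have hy2 : 0 < y ^ (δ2 - 1 - 1) := Real.rpow_pos_of_pos hy _
    have hcoef : 0 < C2 * δ2 * (δ2 - 1) :=
      mul_pos_of_neg_of_neg (mul_neg_of_pos_of_neg hC2pos hδ2neg) (by linarith)
    have hmul := mul_pos hcoef hy2
    have heq : C2 * δ2 * (δ2 - 1) * y ^ (δ2 - 1 - 1)
        = C2 * δ2 * ((δ2 - 1) * y ^ (δ2 - 1 - 1)) := by ring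
    rw [heq] at hmul
    exact hmul
  -- first derivative positive on Ici k2
  have hdpos : ∀ y : ℝ, k2 ≤ y → 0 < C2 * δ2 * y ^ (δ2 - 1) + βs := by
    intro y hy
    have hle : y ^ (δ2 - 1) ≤ k2 ^ (δ2 - 1) :=
      Real.rpow_le_rpow_of_nonpos hk2pos hy (by linarith)
    have hneg : C2 * δ2 ≤ 0 := (mul_nonpos_iff.mpr (Or.inl ⟨hC2pos.le, hδ2neg.le⟩))
    have hmul : C2 * δ2 * k2 ^ (δ2 - 1) ≤ C2 * δ2 * y ^ (δ2 - 1) :=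
      mul_le_mul_of_nonpos_left hle hneg
    calc 0 < C1 * δ1 * k2 ^ (δ1 - 1) := hk2dpos
      _ = C2 * δ2 * k2 ^ (δ2 - 1) + βs := hfit2
      _ ≤ C2 * δ2 * y ^ (δ2 - 1) + βs := by linarith
  have hmono : StrictMonoOn w0 (Set.Ici k2) := by
    apply strictMonoOn_of_deriv_pos (convex_Ici k2)
    · intro y hy
      exact ((hd y (lt_of_lt_of_le hk2pos hy)).continuousAt).continuousWithinAt
    · intro y hy
      rw [interior_Ici] at hy
      have hypos : 0 < y := lt_trans hk2pos hy
      rw [hderiv y hypos]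
      exact hdpos y (le_of_lt hy)
  have hw0k2 : w0 k2 = C1 * k2 ^ δ1 := by rw [hw0]; simpa using hfit1.symm
  have hk2vpos : 0 < C1 * k2 ^ δ1 := by
    have := Real.rpow_pos_of_pos hk2pos δ1
    positivity
  refine ⟨hw0k2, hk2vpos, hk2d, hk2dpos, hdd, hmono, ?_⟩
  intro y hy
  have hpos : 0 < w0 y := by
    rcases eq_or_lt_of_le hy with rfl | hlt
    · rw [hw0k2]; exact hk2vpos
    · have := hmono (Set.self_mem_Ici) (Set.mem_Ici.mpr hy) hlt
      rw [hw0k2] at this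
      linarith
  rw [hw0] at hpos
  simpa using hpos
end

section
/- Set k4 = (δ1/(δ1 − 1))·(βb/βs) and C1' = (βs/δ1)·k4^{1−δ1} = (βs/δ1)^{δ1}·((δ1 − 1)/βb)^{δ1−1}. Then the smooth-fit conditions C1'·k4^{δ1} = βs·k4 − βb and C1'·δ1·k4^{δ1−1} = βs hold. Moreover, with k1 = (βs/βb)·(−δ2)/(1 − δ2), one has k1 < k4. -/
/-- k4 = (δ1/(δ1−1))·(βb/βs) and C1' = (βs/δ1)·k4^{1−δ1}
= (βs/δ1)^{δ1}·((δ1−1)/βb)^{δ1−1} satisfy the smooth-fit conditions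
C1'·k4^{δ1} = βs·k4 − βb and C1'·δ1·k4^{δ1−1} = βs; moreover k1 < k4. -/
theorem stmt_16 (lam ρ μ1 μ2 δ1 δ2 βs βb k4 C1' k1 : ℝ)
    (hlam : 0 < lam) (hμ1 : μ1 < ρ) (hμ2 : μ2 < ρ)
    (hβs : 0 < βs) (hβ : βs < βb)
    (hδ1 : δ1 = (1 + (μ1 - μ2) / lam
      + Real.sqrt ((1 + (μ1 - μ2) / lam) ^ 2 + 4 * (ρ - μ1) / lam)) / 2)
    (hδ2 : δ2 = (1 + (μ1 - μ2) / lam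
      - Real.sqrt ((1 + (μ1 - μ2) / lam) ^ 2 + 4 * (ρ - μ1) / lam)) / 2)
    (hk4 : k4 = (δ1 / (δ1 - 1)) * (βb / βs))
    (hC1' : C1' = (βs / δ1) * k4 ^ (1 - δ1))
    (hk1 : k1 = (βs / βb) * (-δ2) / (1 - δ2)) :
    C1' = (βs / δ1) ^ δ1 * ((δ1 - 1) / βb) ^ (δ1 - 1) ∧
    C1' * k4 ^ δ1 = βs * k4 - βb ∧
    C1' * δ1 * k4 ^ (δ1 - 1) = βs ∧
    k1 < k4 := by
  set a : ℝ := 1 + (μ1 - μ2) / lam with ha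
  set s : ℝ := Real.sqrt (a ^ 2 + 4 * (ρ - μ1) / lam) with hs
  have hρμ1 : 0 < ρ - μ1 := by linarith
  have hρμ2 : 0 < ρ - μ2 := by linarith
  have hargpos : 0 < a ^ 2 + 4 * (ρ - μ1) / lam := by positivity
  have hs0 : 0 ≤ s := Real.sqrt_nonneg _
  have hs2 : s ^ 2 = a ^ 2 + 4 * (ρ - μ1) / lam := Real.sq_sqrt hargpos.le
  have hc : 0 < 4 * (ρ - μ1) / lam := by positivity
  have hc2 : 0 < (ρ - μ2) / lam := by positivity
  have key : a = 1 + (μ1 - μ2) / lam := ha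
  have hsum : 4 * (ρ - μ1) / lam + 4 * a - 4 = 4 * ((ρ - μ2) / lam) := by
    rw [key]; field_simp; ring
  have hδ1gt : 1 < δ1 := by
    rw [hδ1]
    nlinarith [sq_nonneg (s + a - 2), sq_nonneg (s - (2 - a))]
  have hδ2neg : δ2 < 0 := by
    rw [hδ2]
    nlinarith [sq_nonneg (s - a), sq_nonneg (s + a)]
  have hδ1pos : 0 < δ1 := by linarith
  have hdm : 0 < δ1 - 1 := by linarith
  have hβb : 0 < βb := lt_trans hβs hβ
  have hk4pos : 0 < k4 := by rw [hk4]; positivity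
  have hxpos : 0 < βs / δ1 := by positivity
  have hypos : 0 < (δ1 - 1) / βb := by positivity
  have hinv : k4⁻¹ = (βs / δ1) * ((δ1 - 1) / βb) := by
    rw [hk4]; field_simp
  have hpow : k4 ^ (1 - δ1) = (βs / δ1) ^ (δ1 - 1) * ((δ1 - 1) / βb) ^ (δ1 - 1) := by
    have : (1 : ℝ) - δ1 = -(δ1 - 1) := by ring
    rw [this, Real.rpow_neg hk4pos.le, ← Real.inv_rpow hk4pos.le, hinv,
      Real.mul_rpow hxpos.le hypos.le]
  have part1 : C1' = (βs / δ1) ^ δ1 * ((δ1 - 1) / βb) ^ (δ1 - 1) := by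
    have h := Real.rpow_add hxpos 1 (δ1 - 1)
    rw [Real.rpow_one, show (1 : ℝ) + (δ1 - 1) = δ1 by ring] at h
    rw [hC1', hpow, ← mul_assoc, ← h]
  have hmul : k4 ^ (1 - δ1) * k4 ^ δ1 = k4 := by
    rw [← Real.rpow_add hk4pos]
    simp
  have part2 : C1' * k4 ^ δ1 = βs * k4 - βb := by
    rw [hC1', mul_assoc, hmul, hk4]
    field_simp
    ring
  have hmul2 : k4 ^ (1 - δ1) * k4 ^ (δ1 - 1) = 1 := by
    rw [← Real.rpow_add hk4pos]
    norm_num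
  have part3 : C1' * δ1 * k4 ^ (δ1 - 1) = βs := by
    calc C1' * δ1 * k4 ^ (δ1 - 1)
        = (βs / δ1 * δ1) * (k4 ^ (1 - δ1) * k4 ^ (δ1 - 1)) := by rw [hC1']; ring
      _ = βs := by rw [hmul2, div_mul_cancel₀ _ (ne_of_gt hδ1pos)]; ring
  have part4 : k1 < k4 := by
    have hk1lt : k1 < 1 := by
      rw [hk1]
      rw [div_lt_one (by linarith)]
      have h1 : (βs / βb) * (-δ2) < -δ2 :=
        mul_lt_of_lt_one_left (by linarith) ((div_lt_one hβb).mpr hβ)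
      linarith
    have hk4gt : 1 < k4 := by
      rw [hk4]
      have h1 : 1 < δ1 / (δ1 - 1) := by
        rw [lt_div_iff₀ hdm]; linarith
      have h2 : 1 < βb / βs := (one_lt_div hβs).mpr hβ
      exact one_lt_mul h1.le h2
    linarith
  exact ⟨part1, part2, part3, part4⟩
end

section
/- Set k4 = (δ1/(δ1 − 1))·(βb/βs). Then for every y ≥ k4, one has (ρ − μ2)·βs·y − (ρ − μ1)·βb ≥ 0. Equivalently, k4 ≥ ((ρ−μ1)/(ρ−μ2))·(βb/βs), which holds because ((ρ−μ1)/(ρ−μ2))·(βb/βs) = ((−δ2)/(1 − δ2))·k4 ≤ k4. -/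
/-- with k4 = (δ1/(δ1−1))·(βb/βs), for every y ≥ k4 one has
(ρ−μ2)·βs·y − (ρ−μ1)·βb ≥ 0; equivalently k4 ≥ ((ρ−μ1)/(ρ−μ2))·(βb/βs), which holds
because ((ρ−μ1)/(ρ−μ2))·(βb/βs) = ((−δ2)/(1−δ2))·k4 ≤ k4. -/
theorem stmt_18 (lam ρ μ1 μ2 δ1 δ2 βs βb k4 : ℝ)
    (hlam : 0 < lam) (hμ1 : μ1 < ρ) (hμ2 : μ2 < ρ)
    (hβs : 0 < βs) (hβ : βs < βb)
    (hδ1 : δ1 = (1 + (μ1 - μ2) / lam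
      + Real.sqrt ((1 + (μ1 - μ2) / lam) ^ 2 + 4 * (ρ - μ1) / lam)) / 2)
    (hδ2 : δ2 = (1 + (μ1 - μ2) / lam
      - Real.sqrt ((1 + (μ1 - μ2) / lam) ^ 2 + 4 * (ρ - μ1) / lam)) / 2)
    (hk4 : k4 = (δ1 / (δ1 - 1)) * (βb / βs)) :
    (∀ y : ℝ, k4 ≤ y → 0 ≤ (ρ - μ2) * βs * y - (ρ - μ1) * βb) ∧
    (ρ - μ1) / (ρ - μ2) * (βb / βs) ≤ k4 ∧
    (ρ - μ1) / (ρ - μ2) * (βb / βs) = (-δ2) / (1 - δ2) * k4 := by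
  have hlam' : lam ≠ 0 := ne_of_gt hlam
  have h4p : 0 < 4 * (ρ - μ1) / lam := by
    have : (4 : ℝ) * (ρ - μ1) / lam = (4 * (ρ - μ1)) / lam := by ring
    rw [this]; apply div_pos (by linarith) hlam
  set s : ℝ := 1 + (μ1 - μ2) / lam with hs
  set D : ℝ := s ^ 2 + 4 * (ρ - μ1) / lam with hD
  have hDpos : 0 < D := by rw [hD]; nlinarith [sq_nonneg s]
  have hsq : Real.sqrt D ^ 2 = D := Real.sq_sqrt hDpos.le
  have hsum : δ1 + δ2 = s := by rw [hδ1, hδ2]; ring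
  have hprod : δ1 * δ2 = -((ρ - μ1) / lam) := by
    rw [hδ1, hδ2]
    have h : (s + Real.sqrt D) / 2 * ((s - Real.sqrt D) / 2)
        = (s ^ 2 - Real.sqrt D ^ 2) / 4 := by ring
    rw [h, hsq, hD]
    field_simp
    ring
  have hδ2neg : δ2 < 0 := by
    have hlt : s < Real.sqrt D := by
      have h1 : s ≤ Real.sqrt (s ^ 2) := by
        rw [Real.sqrt_sq_eq_abs]; exact le_abs_self s
      have h2 : Real.sqrt (s ^ 2) < Real.sqrt D := by
        apply Real.sqrt_lt_sqrt (sq_nonneg s)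
        rw [hD]; linarith
      linarith
    rw [hδ2]; linarith
  have hδ1gt : 1 < δ1 := by
    have hlt : 2 - s < Real.sqrt D := by
      rcases le_or_gt (2 - s) 0 with h | h
      · linarith [Real.sqrt_pos.mpr hDpos]
      · have hr : 0 < (ρ - μ2) / lam := div_pos (by linarith) hlam
        have hsub : 1 - s = -((μ1 - μ2) / lam) := by rw [hs]; ring
        have h5 : (2 - s) ^ 2 < D := by
          rw [hD]
          have e : (4:ℝ) * (ρ - μ1) / lam = 4 * ((ρ - μ1) / lam) := by ring
          rw [e]
          have e2 : (ρ - μ1) / lam = (ρ - μ2) / lam - (μ1 - μ2) / lam := by ring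
          have e3 : (2 - s) ^ 2 - s ^ 2 = 4 * (1 - s) := by ring
          nlinarith [hsub, hr, e2, e3]
        calc 2 - s = Real.sqrt ((2 - s) ^ 2) := by rw [Real.sqrt_sq h.le]
          _ < Real.sqrt D := Real.sqrt_lt_sqrt (sq_nonneg _) h5
    rw [hδ1]; linarith
  have hfac : (δ1 - 1) * (1 - δ2) = (ρ - μ2) / lam := by
    have h : (δ1 - 1) * (1 - δ2) = (δ1 + δ2) - 1 - δ1 * δ2 := by ring
    rw [h, hsum, hprod, hs]; ring
  have hd1 : 0 < δ1 - 1 := by linarith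
  have hd2 : 0 < 1 - δ2 := by linarith
  have h1 : ρ - μ1 = lam * -(δ1 * δ2) := by
    rw [hprod]; field_simp
  have h2 : ρ - μ2 = lam * ((δ1 - 1) * (1 - δ2)) := by
    rw [hfac]; field_simp
  have hkey : (ρ - μ1) / (ρ - μ2) * (βb / βs) = (-δ2) / (1 - δ2) * k4 := by
    rw [hk4, h1, h2, mul_div_mul_left _ _ hlam']
    field_simp
  have hk4pos : 0 < k4 := by
    rw [hk4]
    have hδ1pos : 0 < δ1 := by linarith
    have hβb : 0 < βb := by linarith
    exact mul_pos (div_pos hδ1pos hd1) (div_pos hβb hβs)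
  have hle : (ρ - μ1) / (ρ - μ2) * (βb / βs) ≤ k4 := by
    rw [hkey]
    have hr : (-δ2) / (1 - δ2) ≤ 1 := by
      rw [div_le_one hd2]; linarith
    nlinarith
  refine ⟨?_, hle, hkey⟩
  intro y hy
  have hρ2 : 0 < ρ - μ2 := by linarith
  have h3 : (ρ - μ1) / (ρ - μ2) * (βb / βs) ≤ y := le_trans hle hy
  have h4 : (ρ - μ1) * βb ≤ (ρ - μ2) * βs * y := by
    rw [div_mul_div_comm, div_le_iff₀ (mul_pos hρ2 hβs)] at h3
    linarith
  linarith
end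

section
/- Set γ = βb/βs, k1 = (βs/βb)·(−δ2)/(1 − δ2) and k4 = (δ1/(δ1 − 1))·(βb/βs), and define, for positive reals r < s, F1(r,s) = [(1 − δ2)·s^{1−δ1} + δ2·r^{−δ1}]/(δ1 − δ2) + γ·[δ2·s^{−δ1} + (1 − δ2)·r^{1−δ1}]/(δ1 − δ2) − k4^{1−δ1}/δ1 and F2(r,s) = [(1 − δ1)·s^{1−δ2} + δ1·r^{−δ2}]/(δ1 − δ2) + γ·[δ1·s^{−δ2} + (1 − δ1)·r^{1−δ2}]/(δ1 − δ2) − γ·k1^{1−δ2}/(−δ2). Then the pair (k1, k4) solves this system: F1(k1, k4) = 0 and F2(k1, k4) = 0. -/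
set_option maxHeartbeats 1000000 in
/-- with γ = βb/βs, k1 = (βs/βb)·(−δ2)/(1−δ2) and
k4 = (δ1/(δ1−1))·(βb/βs), the pair (k1, k4) solves the system F1 = F2 = 0 where
F1(r,s) = [(1−δ2)s^{1−δ1} + δ2 r^{−δ1}]/(δ1−δ2) + γ[δ2 s^{−δ1} + (1−δ2) r^{1−δ1}]/(δ1−δ2)
  − k4^{1−δ1}/δ1,
F2(r,s) = [(1−δ1)s^{1−δ2} + δ1 r^{−δ2}]/(δ1−δ2) + γ[δ1 s^{−δ2} + (1−δ1) r^{1−δ2}]/(δ1−δ2)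
  − γ·k1^{1−δ2}/(−δ2). -/
theorem stmt_19 (lam ρ μ1 μ2 δ1 δ2 βs βb γ k1 k4 : ℝ)
    (hlam : 0 < lam) (hμ1 : μ1 < ρ) (hμ2 : μ2 < ρ)
    (hβs : 0 < βs) (hβ : βs < βb)
    (hδ1 : δ1 = (1 + (μ1 - μ2) / lam
      + Real.sqrt ((1 + (μ1 - μ2) / lam) ^ 2 + 4 * (ρ - μ1) / lam)) / 2)
    (hδ2 : δ2 = (1 + (μ1 - μ2) / lam
      - Real.sqrt ((1 + (μ1 - μ2) / lam) ^ 2 + 4 * (ρ - μ1) / lam)) / 2)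
    (hγ : γ = βb / βs)
    (hk1 : k1 = (βs / βb) * (-δ2) / (1 - δ2))
    (hk4 : k4 = (δ1 / (δ1 - 1)) * (βb / βs))
    (F1 F2 : ℝ → ℝ → ℝ)
    (hF1 : F1 = fun r s : ℝ =>
      ((1 - δ2) * s ^ (1 - δ1) + δ2 * r ^ (-δ1)) / (δ1 - δ2)
        + γ * (δ2 * s ^ (-δ1) + (1 - δ2) * r ^ (1 - δ1)) / (δ1 - δ2)
        - k4 ^ (1 - δ1) / δ1)
    (hF2 : F2 = fun r s : ℝ =>
      ((1 - δ1) * s ^ (1 - δ2) + δ1 * r ^ (-δ2)) / (δ1 - δ2)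
        + γ * (δ1 * s ^ (-δ2) + (1 - δ1) * r ^ (1 - δ2)) / (δ1 - δ2)
        - γ * k1 ^ (1 - δ2) / (-δ2)) :
    F1 k1 k4 = 0 ∧ F2 k1 k4 = 0 := by

  -- abbreviations
  set c : ℝ := 1 + (μ1 - μ2) / lam with hc
  set s : ℝ := Real.sqrt ((1 + (μ1 - μ2) / lam) ^ 2 + 4 * (ρ - μ1) / lam) with hs
  have hd : (0:ℝ) < 4 * (ρ - μ1) / lam := by
    apply div_pos <;> nlinarith
  have hs0 : 0 ≤ s := Real.sqrt_nonneg _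
  have hs2 : s ^ 2 = c ^ 2 + 4 * (ρ - μ1) / lam := by
    rw [hs, hc, Real.sq_sqrt]; positivity
  clear_value c s
  clear hs
  -- δ2 < 0
  have hcs : c < s := by
    have key : c ^ 2 < s ^ 2 := by rw [hs2]; linarith
    have h1 : c ≤ |c| := le_abs_self _
    have h2 : |c| < |s| := by
      have := Real.sqrt_lt_sqrt (sq_nonneg c) key
      rwa [Real.sqrt_sq_eq_abs, Real.sqrt_sq_eq_abs] at this
    calc c ≤ |c| := h1
      _ < |s| := h2
      _ = s := abs_of_nonneg hs0
  have hδ2neg : δ2 < 0 := by rw [hδ2]; linarith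
  -- δ1 > 1
  have hkey2 : (2 - c) ^ 2 < s ^ 2 := by
    rw [hs2]
    have h3 : 0 < (ρ - μ2) / lam := div_pos (by linarith) hlam
    have h4 : (ρ - μ2) / lam = (ρ - μ1) / lam + (μ1 - μ2) / lam := by ring
    have h5 : 4 * (ρ - μ1) / lam = 4 * ((ρ - μ1) / lam) := by ring
    have h6 : (μ1 - μ2) / lam = c - 1 := by rw [hc]; ring
    nlinarith [h3, h4, h5, h6]
  have h2cs : 2 - c < s := by
    have h1 : 2 - c ≤ |2 - c| := le_abs_self _
    have h2 : |2 - c| < |s| := by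
      have := Real.sqrt_lt_sqrt (sq_nonneg (2 - c)) hkey2
      rwa [Real.sqrt_sq_eq_abs, Real.sqrt_sq_eq_abs] at this
    calc 2 - c ≤ |2 - c| := h1
      _ < |s| := h2
      _ = s := abs_of_nonneg hs0
  have hδ1gt : 1 < δ1 := by rw [hδ1]; linarith
  -- positivity of k1, k4
  have hβb : 0 < βb := hβs.trans hβ
  have hk1pos : 0 < k1 := by
    rw [hk1]
    apply div_pos (mul_pos (div_pos hβs hβb) (by linarith)) (by linarith)
  have hk4pos : 0 < k4 := by
    rw [hk4]
    apply mul_pos (div_pos (by linarith) (by linarith)) (div_pos hβb hβs)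
  -- rpow splits
  have e1 : k4 ^ (1 - δ1) = k4 ^ (-δ1) * k4 := by
    rw [show (1 - δ1) = -δ1 + 1 by ring, Real.rpow_add hk4pos, Real.rpow_one]
  have e2 : k1 ^ (1 - δ1) = k1 ^ (-δ1) * k1 := by
    rw [show (1 - δ1) = -δ1 + 1 by ring, Real.rpow_add hk1pos, Real.rpow_one]
  have e3 : k4 ^ (1 - δ2) = k4 ^ (-δ2) * k4 := by
    rw [show (1 - δ2) = -δ2 + 1 by ring, Real.rpow_add hk4pos, Real.rpow_one]
  have e4 : k1 ^ (1 - δ2) = k1 ^ (-δ2) * k1 := by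
    rw [show (1 - δ2) = -δ2 + 1 by ring, Real.rpow_add hk1pos, Real.rpow_one]
  have hne1 : δ1 - δ2 ≠ 0 := by linarith
  have hne2 : δ1 ≠ 0 := by linarith
  have hne3 : (1:ℝ) - δ2 ≠ 0 := by linarith
  have hne4 : δ1 - 1 ≠ 0 := by linarith
  have hne5 : βs ≠ 0 := ne_of_gt hβs
  have hne6 : βb ≠ 0 := ne_of_gt hβb
  have hne7 : δ2 ≠ 0 := ne_of_lt hδ2neg
  constructor
  · rw [hF1]
    simp only [e1, e2]
    generalize k1 ^ (-δ1) = X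
    generalize k4 ^ (-δ1) = Y
    rw [hγ, hk1, hk4]
    field_simp
    ring
  · rw [hF2]
    simp only [e3, e4]
    generalize k1 ^ (-δ2) = Z
    generalize k4 ^ (-δ2) = W
    rw [hγ, hk1, hk4]
    field_simp
    ring
end
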